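/- Let U be a finite set of integers each at least 3, let 𝒟 be a family of nonempty subsets of U, and let 𝒞, 𝒞' ⊆ 𝒟 be exact covers of U. In the forest F = F(U,𝒟), let S consist of the eight isolated vertices of F together with all star leaves of T_D for all D ∈ 𝒞, and let S' consist of the eight isolated vertices of F together with all star leaves of T_D for all D ∈ 𝒞'. Let S_0, …, S_ℓ be a TJ-sequence of feasible sets from S to S' of minimum length, and for each index m let 𝒮_m = {D ∈ 𝒟 : T_D is full under S_m}. If S_i and S_{i'} are clean, i + 1 < i', and S_j is not clean for every j with i < j < i', then 𝒮_{i'} is obtained from 𝒮_i by a split or by a merge. -/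

import Mathlib

/-! The forest `F = F(U, 𝒟)` for a finite set `U` of integers (each at least 3) and a
family `𝒟` of nonempty subsets of `U`.  For each `D ∈ 𝒟` it has a tree `T_D`
consisting of a root, two antennae (leaves attached to the root) and, for each
`d ∈ D`, a star with center adjacent to the root and exactly `d` star leaves;
in addition there are eight isolated vertices.  We realise the vertex set as the
valid vertices of the following inductive type. -/

/-- Potential vertices of the forest `F(U, 𝒟)`. -/
inductive FV where
  /-- the eight isolated vertices (`n < 8`) -/
  | iso : ℕ → FV
  /-- the root of the tree `T_D` -/
  | root : Finset ℕ → FV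
  /-- the two antennae of `T_D` (`a < 2`) -/
  | antenna : Finset ℕ → ℕ → FV
  /-- the center of the star of `T_D` corresponding to `d ∈ D` -/
  | center : Finset ℕ → ℕ → FV
  /-- the `j`-th star leaf (`j < d`) of the star of `T_D` corresponding to `d ∈ D` -/
  | leaf : Finset ℕ → ℕ → ℕ → FV
deriving DecidableEq

/-- The vertices of the forest `F(U, 𝒟)` are exactly the valid ones. -/
def FV.valid (𝒟 : Finset (Finset ℕ)) : FV → Prop
  | .iso n => n < 8
  | .root D => D ∈ 𝒟
  | .antenna D a => D ∈ 𝒟 ∧ a < 2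
  | .center D d => D ∈ 𝒟 ∧ d ∈ D
  | .leaf D d j => D ∈ 𝒟 ∧ d ∈ D ∧ j < d

/-- Star leaves. -/
def FV.isStarLeaf : FV → Bool
  | .leaf _ _ _ => true
  | _ => false

/-- The star of `T_D` for `d ∈ D` is full under `R`: `R` contains all its star leaves. -/
def starFull (D : Finset ℕ) (d : ℕ) (R : Finset FV) : Prop :=
  ∀ j < d, FV.leaf D d j ∈ R

/-- The star of `T_D` for `d ∈ D` is empty under `R`: `R` contains none of its star leaves. -/
def starEmpty (D : Finset ℕ) (d : ℕ) (R : Finset FV) : Prop :=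
  ∀ j < d, FV.leaf D d j ∉ R

/-- A star is clean if it is full or empty. -/
def starClean (D : Finset ℕ) (d : ℕ) (R : Finset FV) : Prop :=
  starFull D d R ∨ starEmpty D d R

/-- The tree `T_D` is full under `R`: `R` contains all star leaves of `T_D`. -/
def treeFull (D : Finset ℕ) (R : Finset FV) : Prop :=
  ∀ d ∈ D, starFull D d R

/-- The tree `T_D` is empty under `R`: `R` contains no star leaf of `T_D`. -/
def treeEmpty (D : Finset ℕ) (R : Finset FV) : Prop :=
  ∀ d ∈ D, starEmpty D d R

/-- A tree is clean if it is full or empty. -/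
def treeClean (D : Finset ℕ) (R : Finset FV) : Prop :=
  treeFull D R ∨ treeEmpty D R

/-- The tree `T_D` is marked by `R`: both its antennae belong to `R`. -/
def treeMarked (D : Finset ℕ) (R : Finset FV) : Prop :=
  FV.antenna D 0 ∈ R ∧ FV.antenna D 1 ∈ R

instance (D : Finset ℕ) (d : ℕ) (R : Finset FV) : Decidable (starFull D d R) := by
  unfold starFull; infer_instance

instance (D : Finset ℕ) (R : Finset FV) : Decidable (treeFull D R) := by
  unfold treeFull; infer_instance

/-- A set `R ⊆ V(F)` is clean: exactly eight vertices of `R` are not star leaves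
and every tree `T_D` (`D ∈ 𝒟`) is clean under `R`. -/
def CleanSet (𝒟 : Finset (Finset ℕ)) (R : Finset FV) : Prop :=
  (R.filter (fun v => v.isStarLeaf = false)).card = 8 ∧ ∀ D ∈ 𝒟, treeClean D R

/-- A set `R ⊆ V(F)` is feasible: either it is clean, or exactly eight of its
vertices are not star leaves, exactly three trees `T_{D1}, T_{D2}, T_{D3}` are
marked, every other tree is clean, `T_{D1}` is not clean, `T_{D3}` is clean, every
non-clean tree is `T_{D1}` or `T_{D2}`, exactly two stars are marked—one of
`T_{D1}` and one of `T_{D2}`—the marked star of `T_{D1}` is clean iff the marked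
star of `T_{D2}` is, and every unmarked star is clean. -/
def FeasibleSet (𝒟 : Finset (Finset ℕ)) (R : Finset FV) : Prop :=
  CleanSet 𝒟 R ∨
  ((R.filter (fun v => v.isStarLeaf = false)).card = 8 ∧
    ∃ D1 ∈ 𝒟, ∃ D2 ∈ 𝒟, ∃ D3 ∈ 𝒟, D1 ≠ D2 ∧ D1 ≠ D3 ∧ D2 ≠ D3 ∧
      treeMarked D1 R ∧ treeMarked D2 R ∧ treeMarked D3 R ∧
      (∀ D ∈ 𝒟, treeMarked D R → D = D1 ∨ D = D2 ∨ D = D3) ∧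
      (∀ D ∈ 𝒟, D ≠ D1 → D ≠ D2 → D ≠ D3 → treeClean D R) ∧
      ¬ treeClean D1 R ∧ treeClean D3 R ∧
      (∀ D ∈ 𝒟, ¬ treeClean D R → D = D1 ∨ D = D2) ∧
      ∃ d1 ∈ D1, ∃ d2 ∈ D2,
        FV.center D1 d1 ∈ R ∧ FV.center D2 d2 ∈ R ∧
        (∀ D ∈ 𝒟, ∀ d ∈ D, FV.center D d ∈ R →
          (D = D1 ∧ d = d1) ∨ (D = D2 ∧ d = d2)) ∧
        (starClean D1 d1 R ↔ starClean D2 d2 R) ∧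
        (∀ D ∈ 𝒟, ∀ d ∈ D, FV.center D d ∉ R → starClean D d R))

/-- `TJFeasSeq 𝒟 seq ℓ S S'` : `seq 0, …, seq ℓ` is a TJ-sequence of feasible subsets
of `V(F)` from `S` to `S'`. -/
def TJFeasSeq (𝒟 : Finset (Finset ℕ)) (seq : ℕ → Finset FV) (ℓ : ℕ)
    (S S' : Finset FV) : Prop :=
  seq 0 = S ∧ seq ℓ = S' ∧
    (∀ i ≤ ℓ, (∀ v ∈ seq i, v.valid 𝒟) ∧ FeasibleSet 𝒟 (seq i)) ∧
    ∀ i < ℓ, (seq i \ seq (i + 1)).card = 1 ∧ (seq (i + 1) \ seq i).card = 1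

/-- The star leaves of the tree `T_D`, as a finset. -/
def leavesOf (D : Finset ℕ) : Finset FV :=
  D.biUnion fun d => (Finset.range d).image fun j => FV.leaf D d j

/-- The eight isolated vertices of the forest, as a finset. -/
def isoVerts : Finset FV := (Finset.range 8).image FV.iso

/-- The token set associated with a subfamily `𝒞`: the eight isolated vertices
together with all star leaves of `T_D` for all `D ∈ 𝒞`. -/
def tokenSet (𝒞 : Finset (Finset ℕ)) : Finset FV := isoVerts ∪ 𝒞.biUnion leavesOf

/-- A family `C` of subsets of a finite set `U` is an exact cover of `U` if its
members are pairwise disjoint and their union is `U`. -/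
def ExactCover (U : Finset ℕ) (C : Finset (Finset ℕ)) : Prop :=
  (∀ A ∈ C, ∀ B ∈ C, A ≠ B → Disjoint A B) ∧ C.biUnion id = U

/-- `C2` is obtained from `C1` by a split (equivalently `C1` from `C2` by a merge). -/
def SplitOf (C1 C2 : Finset (Finset ℕ)) : Prop :=
  ∃ D1 D2 D3 : Finset ℕ, D2 ≠ D3 ∧ C1 \ C2 = {D1} ∧ C2 \ C1 = {D2, D3}

/-- `C2` is obtained from `C1` by a split or by a merge. -/
def SplitOrMerge (C1 C2 : Finset (Finset ℕ)) : Prop :=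
  SplitOf C1 C2 ∨ SplitOf C2 C1

open Finset

/-! ### Auxiliary definitions and lemmas -/

instance (D : Finset ℕ) (d : ℕ) (R : Finset FV) : Decidable (starEmpty D d R) := by
  unfold starEmpty; infer_instance

instance (D : Finset ℕ) (d : ℕ) (R : Finset FV) : Decidable (starClean D d R) := by
  unfold starClean; infer_instance

instance (D : Finset ℕ) (R : Finset FV) : Decidable (treeClean D R) := by
  unfold treeClean treeEmpty; infer_instance

instance (D : Finset ℕ) (R : Finset FV) : Decidable (treeMarked D R) := by
  unfold treeMarked; infer_instance

/-- the number of star leaves of the star `(D,d)` present in `R` -/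
def cnt (R : Finset FV) (D : Finset ℕ) (d : ℕ) : ℕ :=
  ((Finset.range d).filter (fun j => FV.leaf D d j ∈ R)).card

lemma cnt_le (R : Finset FV) (D : Finset ℕ) (d : ℕ) : cnt R D d ≤ d := by
  simpa [cnt] using Finset.card_filter_le (Finset.range d) (fun j => FV.leaf D d j ∈ R)

lemma starFull_iff_cnt {R : Finset FV} {D : Finset ℕ} {d : ℕ} :
    starFull D d R ↔ cnt R D d = d := by
  constructor
  · intro h
    unfold cnt
    rw [Finset.filter_true_of_mem (fun j hj => h j (Finset.mem_range.1 hj)), Finset.card_range]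
  · intro h j hj
    have heq : (Finset.range d).filter (fun j => FV.leaf D d j ∈ R) = Finset.range d := by
      apply Finset.eq_of_subset_of_card_le (Finset.filter_subset _ _)
      rw [Finset.card_range]
      exact le_of_eq h.symm
    have hj' : j ∈ (Finset.range d).filter (fun j => FV.leaf D d j ∈ R) := by
      rw [heq]; exact Finset.mem_range.2 hj
    exact (Finset.mem_filter.1 hj').2

lemma starEmpty_iff_cnt {R : Finset FV} {D : Finset ℕ} {d : ℕ} :
    starEmpty D d R ↔ cnt R D d = 0 := by
  unfold starEmpty cnt
  rw [Finset.card_eq_zero, Finset.filter_eq_empty_iff]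
  constructor
  · intro h j hj; exact h j (Finset.mem_range.1 hj)
  · intro h j hj; exact h (Finset.mem_range.2 hj)

lemma starClean_iff_cnt {R : Finset FV} {D : Finset ℕ} {d : ℕ} :
    starClean D d R ↔ (cnt R D d = d ∨ cnt R D d = 0) := by
  unfold starClean
  rw [starFull_iff_cnt, starEmpty_iff_cnt]

lemma cnt_pos_of_mem {R : Finset FV} {D : Finset ℕ} {d j : ℕ} (hj : j < d)
    (h : FV.leaf D d j ∈ R) : 0 < cnt R D d := by
  apply Finset.card_pos.2
  exact ⟨j, Finset.mem_filter.2 ⟨Finset.mem_range.2 hj, h⟩⟩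

lemma cnt_lt_of_not_mem {R : Finset FV} {D : Finset ℕ} {d j : ℕ} (hj : j < d)
    (h : FV.leaf D d j ∉ R) : cnt R D d < d := by
  have hss : (Finset.range d).filter (fun j => FV.leaf D d j ∈ R) ⊂ Finset.range d := by
    refine ⟨Finset.filter_subset _ _, fun hsub => ?_⟩
    exact h (Finset.mem_filter.1 (hsub (Finset.mem_range.2 hj))).2
  simpa [cnt] using Finset.card_lt_card hss

/-- data of a non-clean feasible set -/
def NCd (𝒟 : Finset (Finset ℕ)) (R : Finset FV) (D1 D2 D3 : Finset ℕ) (d1 d2 : ℕ) : Prop :=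
  D1 ∈ 𝒟 ∧ D2 ∈ 𝒟 ∧ D3 ∈ 𝒟 ∧ D1 ≠ D2 ∧ D1 ≠ D3 ∧ D2 ≠ D3 ∧
  treeMarked D1 R ∧ treeMarked D2 R ∧ treeMarked D3 R ∧
  (∀ D ∈ 𝒟, treeMarked D R → D = D1 ∨ D = D2 ∨ D = D3) ∧
  (∀ D ∈ 𝒟, D ≠ D1 → D ≠ D2 → D ≠ D3 → treeClean D R) ∧
  ¬ treeClean D1 R ∧ treeClean D3 R ∧
  (∀ D ∈ 𝒟, ¬ treeClean D R → D = D1 ∨ D = D2) ∧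
  d1 ∈ D1 ∧ d2 ∈ D2 ∧ FV.center D1 d1 ∈ R ∧ FV.center D2 d2 ∈ R ∧
  (∀ D ∈ 𝒟, ∀ d ∈ D, FV.center D d ∈ R → (D = D1 ∧ d = d1) ∨ (D = D2 ∧ d = d2)) ∧
  (starClean D1 d1 R ↔ starClean D2 d2 R) ∧
  (∀ D ∈ 𝒟, ∀ d ∈ D, FV.center D d ∉ R → starClean D d R)

lemma feas_struct {𝒟 : Finset (Finset ℕ)} {R : Finset FV}
    (hf : FeasibleSet 𝒟 R) (hnc : ¬ CleanSet 𝒟 R) :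
    ∃ D1 D2 D3 d1 d2, NCd 𝒟 R D1 D2 D3 d1 d2 := by
  rcases hf with h | h
  · exact absurd h hnc
  obtain ⟨-, D1, hD1, D2, hD2, D3, hD3, h12, h13, h23, hm1, hm2, hm3, hmo, hcl,
    hnc1, hc3, hnco, d1, hd1, d2, hd2, hc1, hc2, hco, hiff, humc⟩ := h
  exact ⟨D1, D2, D3, d1, d2, hD1, hD2, hD3, h12, h13, h23, hm1, hm2, hm3, hmo, hcl,
    hnc1, hc3, hnco, hd1, hd2, hc1, hc2, hco, hiff, humc⟩

lemma feas_card8 {𝒟 : Finset (Finset ℕ)} {R : Finset FV} (hf : FeasibleSet 𝒟 R) :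
    (R.filter (fun v => v.isStarLeaf = false)).card = 8 := by
  rcases hf with h | h
  · exact h.1
  · exact h.1

/-- the eight non-leaf vertices of a non-clean feasible set -/
def litSet (D1 D2 D3 : Finset ℕ) (d1 d2 : ℕ) : Finset FV :=
  {FV.antenna D1 0, FV.antenna D1 1, FV.antenna D2 0, FV.antenna D2 1,
   FV.antenna D3 0, FV.antenna D3 1, FV.center D1 d1, FV.center D2 d2}

lemma litSet_card {D1 D2 D3 : Finset ℕ} {d1 d2 : ℕ}
    (h12 : D1 ≠ D2) (h13 : D1 ≠ D3) (h23 : D2 ≠ D3) :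
    (litSet D1 D2 D3 d1 d2).card = 8 := by
  unfold litSet
  rw [card_insert_of_notMem (by simp [h12, h13, h23]),
      card_insert_of_notMem (by simp [h12, h13, h23]),
      card_insert_of_notMem (by simp [h12, h13, h23, h12.symm]),
      card_insert_of_notMem (by simp [h12, h13, h23, h12.symm]),
      card_insert_of_notMem (by simp [h13.symm, h23.symm]),
      card_insert_of_notMem (by simp [h13.symm, h23.symm]),
      card_insert_of_notMem (by simp [h12]),
      card_singleton]

lemma nonleaf_eq_lit {𝒟 : Finset (Finset ℕ)} {R : Finset FV} {D1 D2 D3 : Finset ℕ}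
    {d1 d2 : ℕ} (h8 : (R.filter (fun v => v.isStarLeaf = false)).card = 8)
    (h : NCd 𝒟 R D1 D2 D3 d1 d2) :
    R.filter (fun v => v.isStarLeaf = false) = litSet D1 D2 D3 d1 d2 := by
  obtain ⟨hD1, hD2, hD3, h12, h13, h23, hm1, hm2, hm3, hmo, hcl,
    hnc1, hc3, hnco, hd1, hd2, hc1, hc2, hco, hiff, humc⟩ := h
  refine (Finset.eq_of_subset_of_card_le ?_ (le_of_eq ?_)).symm
  · intro x hx
    rw [Finset.mem_filter]
    unfold litSet at hx
    simp only [Finset.mem_insert, Finset.mem_singleton] at hx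
    rcases hx with h|h|h|h|h|h|h|h <;> subst h <;>
      first
      | exact ⟨hm1.1, rfl⟩ | exact ⟨hm1.2, rfl⟩ | exact ⟨hm2.1, rfl⟩ | exact ⟨hm2.2, rfl⟩
      | exact ⟨hm3.1, rfl⟩ | exact ⟨hm3.2, rfl⟩ | exact ⟨hc1, rfl⟩ | exact ⟨hc2, rfl⟩
  · rw [h8, litSet_card h12 h13 h23]

/-! ### Single token-jump steps -/

/-- `R'` is obtained from `R` by moving the token on `v` to `w`. -/
def stepRel (R R' : Finset FV) (v w : FV) : Prop :=
  v ∈ R ∧ v ∉ R' ∧ w ∈ R' ∧ w ∉ R ∧ ∀ x, x ∈ R' ↔ x = w ∨ (x ∈ R ∧ x ≠ v)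

lemma step_exists {R R' : Finset FV} (h1 : (R \ R').card = 1) (h2 : (R' \ R).card = 1) :
    ∃ v w, stepRel R R' v w := by
  obtain ⟨v, hv⟩ := Finset.card_eq_one.1 h1
  obtain ⟨w, hw⟩ := Finset.card_eq_one.1 h2
  have hvm : v ∈ R \ R' := by rw [hv]; exact Finset.mem_singleton_self v
  have hwm : w ∈ R' \ R := by rw [hw]; exact Finset.mem_singleton_self w
  rw [Finset.mem_sdiff] at hvm hwm
  refine ⟨v, w, hvm.1, hvm.2, hwm.1, hwm.2, fun x => ?_⟩
  constructor
  · intro hx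
    by_cases hxw : x = w
    · exact Or.inl hxw
    · refine Or.inr ⟨?_, fun hxv => hvm.2 (hxv ▸ hx)⟩
      by_contra hxR
      exact hxw (Finset.mem_singleton.1 (hw ▸ Finset.mem_sdiff.2 ⟨hx, hxR⟩))
  · rintro (rfl | ⟨hxR, hxv⟩)
    · exact hwm.1
    · by_contra hxR'
      exact hxv (Finset.mem_singleton.1 (hv ▸ Finset.mem_sdiff.2 ⟨hxR, hxR'⟩))

lemma stepRel.symm {R R' : Finset FV} {v w : FV} (hs : stepRel R R' v w) :
    stepRel R' R w v := by
  obtain ⟨hv, hv', hw', hw, hch⟩ := hs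
  refine ⟨hw', hw, hv, hv', fun x => ?_⟩
  constructor
  · intro hx
    by_cases hxv : x = v
    · exact Or.inl hxv
    · exact Or.inr ⟨(hch x).2 (Or.inr ⟨hx, hxv⟩), fun hxw => hw (hxw ▸ hx)⟩
  · rintro (rfl | ⟨hxR', hxw⟩)
    · exact hv
    · rcases (hch x).1 hxR' with rfl | ⟨hxR, -⟩
      · exact absurd rfl hxw
      · exact hxR

lemma stepRel.card_eq {R R' : Finset FV} {v w : FV} (hs : stepRel R R' v w) :
    R'.card = R.card := by
  obtain ⟨hv, hv', hw', hw, hch⟩ := hs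
  have : R' = insert w (R.erase v) := by
    ext x
    rw [hch x, Finset.mem_insert, Finset.mem_erase]
    tauto
  rw [this, Finset.card_insert_of_notMem (fun hx => hw (Finset.mem_of_mem_erase hx)),
    Finset.card_erase_of_mem hv]
  have : 0 < R.card := Finset.card_pos.2 ⟨v, hv⟩
  omega

lemma stepRel.mem_iff {R R' : Finset FV} {v w : FV} (hs : stepRel R R' v w) {x : FV}
    (hxw : x ≠ w) (hxv : x ≠ v) : (x ∈ R' ↔ x ∈ R) := by
  rw [hs.2.2.2.2]
  simp [hxw, hxv]

lemma cnt_step_eq {R R' : Finset FV} {v w : FV} (hs : stepRel R R' v w)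
    {D : Finset ℕ} {d : ℕ} (hv : ∀ j, FV.leaf D d j ≠ v) (hw : ∀ j, FV.leaf D d j ≠ w) :
    cnt R' D d = cnt R D d := by
  unfold cnt
  congr 1
  apply Finset.filter_congr
  intro j _
  exact hs.mem_iff (hw j) (hv j)

lemma cnt_step_other {R R' : Finset FV} {X1 X2 X : Finset ℕ} {e1 e2 e j1 j2 : ℕ}
    (hs : stepRel R R' (FV.leaf X1 e1 j1) (FV.leaf X2 e2 j2))
    (h1 : ¬ (X = X1 ∧ e = e1)) (h2 : ¬ (X = X2 ∧ e = e2)) :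
    cnt R' X e = cnt R X e := by
  apply cnt_step_eq hs
  · intro j h; apply h1; rw [FV.leaf.injEq] at h; exact ⟨h.1, h.2.1⟩
  · intro j h; apply h2; rw [FV.leaf.injEq] at h; exact ⟨h.1, h.2.1⟩

lemma cnt_step_src {R R' : Finset FV} {X1 X2 : Finset ℕ} {e1 e2 j1 j2 : ℕ}
    (hs : stepRel R R' (FV.leaf X1 e1 j1) (FV.leaf X2 e2 j2))
    (hne : ¬ (X1 = X2 ∧ e1 = e2)) (hj1 : j1 < e1) :
    cnt R' X1 e1 + 1 = cnt R X1 e1 := by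
  have hfe : (Finset.range e1).filter (fun j => FV.leaf X1 e1 j ∈ R') =
      ((Finset.range e1).filter (fun j => FV.leaf X1 e1 j ∈ R)).erase j1 := by
    ext j
    simp only [Finset.mem_erase, Finset.mem_filter]
    constructor
    · rintro ⟨hjr, hjR'⟩
      rcases (hs.2.2.2.2 _).1 hjR' with h | ⟨hjR, hjv⟩
      · exfalso; injection h with a b c; exact hne ⟨a, b⟩
      · refine ⟨fun hj => hjv ?_, hjr, hjR⟩
        rw [hj]
    · rintro ⟨hjne, hjr, hjR⟩
      refine ⟨hjr, (hs.2.2.2.2 _).2 (Or.inr ⟨hjR, fun h => ?_⟩)⟩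
      injection h with a b c; exact hjne c
  have hmem : j1 ∈ (Finset.range e1).filter (fun j => FV.leaf X1 e1 j ∈ R) :=
    Finset.mem_filter.2 ⟨Finset.mem_range.2 hj1, hs.1⟩
  have hpos : 0 < cnt R X1 e1 := Finset.card_pos.2 ⟨j1, hmem⟩
  unfold cnt at *
  rw [hfe, Finset.card_erase_of_mem hmem]
  omega

lemma cnt_step_tgt {R R' : Finset FV} {X1 X2 : Finset ℕ} {e1 e2 j1 j2 : ℕ}
    (hs : stepRel R R' (FV.leaf X1 e1 j1) (FV.leaf X2 e2 j2))
    (hne : ¬ (X1 = X2 ∧ e1 = e2)) (hj2 : j2 < e2) :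
    cnt R' X2 e2 = cnt R X2 e2 + 1 := by
  have hne' : ¬ (X2 = X1 ∧ e2 = e1) := fun h => hne ⟨h.1.symm, h.2.symm⟩
  have := cnt_step_src (X2 := X1) (e2 := e1) (j2 := j1) hs.symm hne' hj2
  omega

lemma cnt_step_same {R R' : Finset FV} {X1 : Finset ℕ} {e1 j1 j2 : ℕ}
    (hs : stepRel R R' (FV.leaf X1 e1 j1) (FV.leaf X1 e1 j2))
    (hj1 : j1 < e1) (hj2 : j2 < e1) :
    cnt R' X1 e1 = cnt R X1 e1 := by
  have hfe : (Finset.range e1).filter (fun j => FV.leaf X1 e1 j ∈ R') =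
      insert j2 (((Finset.range e1).filter (fun j => FV.leaf X1 e1 j ∈ R)).erase j1) := by
    ext j
    simp only [Finset.mem_insert, Finset.mem_erase, Finset.mem_filter]
    constructor
    · rintro ⟨hjr, hjR'⟩
      rcases (hs.2.2.2.2 _).1 hjR' with h | ⟨hjR, hjv⟩
      · injection h with a b c; exact Or.inl c
      · refine Or.inr ⟨fun hj => hjv ?_, hjr, hjR⟩
        rw [hj]
    · rintro (rfl | ⟨hjne, hjr, hjR⟩)
      · exact ⟨Finset.mem_range.2 hj2, (hs.2.2.2.2 _).2 (Or.inl rfl)⟩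
      · refine ⟨hjr, (hs.2.2.2.2 _).2 (Or.inr ⟨hjR, fun h => ?_⟩)⟩
        injection h with a b c; exact hjne c
  have hmem : j1 ∈ (Finset.range e1).filter (fun j => FV.leaf X1 e1 j ∈ R) :=
    Finset.mem_filter.2 ⟨Finset.mem_range.2 hj1, hs.1⟩
  have hmem2 : j2 ∉ ((Finset.range e1).filter (fun j => FV.leaf X1 e1 j ∈ R)).erase j1 := by
    intro h
    exact hs.2.2.2.1 (Finset.mem_filter.1 (Finset.mem_of_mem_erase h)).2
  have hpos : 0 < cnt R X1 e1 := Finset.card_pos.2 ⟨j1, hmem⟩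
  unfold cnt at *
  rw [hfe, Finset.card_insert_of_notMem hmem2, Finset.card_erase_of_mem hmem]
  omega

lemma step_parity {𝒟 : Finset (Finset ℕ)} {R R' : Finset FV} {v w : FV}
    (hs : stepRel R R' v w) (hfR : FeasibleSet 𝒟 R) (hfR' : FeasibleSet 𝒟 R') :
    (v.isStarLeaf = true ∧ w.isStarLeaf = true) ∨
    (v.isStarLeaf = false ∧ w.isStarLeaf = false) := by
  have h8 := feas_card8 hfR
  have h8' := feas_card8 hfR'
  obtain ⟨hv, hv', hw', hw, hch⟩ := hs
  cases hvl : v.isStarLeaf <;> cases hwl : w.isStarLeaf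
  · exact Or.inr ⟨rfl, rfl⟩
  · -- v not leaf, w leaf : the non-leaf part loses v
    exfalso
    have : R'.filter (fun x => x.isStarLeaf = false) =
        (R.filter (fun x => x.isStarLeaf = false)).erase v := by
      ext x
      simp only [Finset.mem_erase, Finset.mem_filter, hch x]
      constructor
      · rintro ⟨(rfl | ⟨hxR, hxv⟩), hxl⟩
        · rw [hwl] at hxl; exact absurd hxl (by simp)
        · exact ⟨hxv, hxR, hxl⟩
      · rintro ⟨hxv, hxR, hxl⟩
        exact ⟨Or.inr ⟨hxR, hxv⟩, hxl⟩
    have hvm : v ∈ R.filter (fun x => x.isStarLeaf = false) :=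
      Finset.mem_filter.2 ⟨hv, hvl⟩
    rw [this, Finset.card_erase_of_mem hvm, h8] at h8'
    omega
  · -- v leaf, w not leaf : the non-leaf part gains w
    exfalso
    have : R'.filter (fun x => x.isStarLeaf = false) =
        insert w (R.filter (fun x => x.isStarLeaf = false)) := by
      ext x
      simp only [Finset.mem_insert, Finset.mem_filter, hch x]
      constructor
      · rintro ⟨(rfl | ⟨hxR, hxv⟩), hxl⟩
        · exact Or.inl rfl
        · exact Or.inr ⟨hxR, hxl⟩
      · rintro (rfl | ⟨hxR, hxl⟩)
        · exact ⟨Or.inl rfl, hwl⟩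
        · refine ⟨Or.inr ⟨hxR, fun hxv => ?_⟩, hxl⟩
          rw [hxv, hvl] at hxl; exact absurd hxl (by simp)
    have hwm : w ∉ R.filter (fun x => x.isStarLeaf = false) :=
      fun h => hw (Finset.mem_filter.1 h).1
    rw [this, Finset.card_insert_of_notMem hwm, h8] at h8'
    omega
  · exact Or.inl ⟨rfl, rfl⟩

lemma nonleaf_mem_eq {R R' : Finset FV} {v w : FV} (hs : stepRel R R' v w)
    (hvl : v.isStarLeaf = true) (hwl : w.isStarLeaf = true) {x : FV}
    (hx : x.isStarLeaf = false) : (x ∈ R' ↔ x ∈ R) := by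
  apply hs.mem_iff
  · intro h; rw [h, hwl] at hx; simp at hx
  · intro h; rw [h, hvl] at hx; simp at hx

lemma isLeaf_cases (v : FV) (h : v.isStarLeaf = true) :
    ∃ X e j, v = FV.leaf X e j := by
  cases v <;> simp [FV.isStarLeaf] at h ⊢

/-! ### Stars, marked stars, and the conserved potential -/

def starsF (𝒟 : Finset (Finset ℕ)) : Finset (Finset ℕ × ℕ) :=
  𝒟.biUnion (fun D => D.image (fun d => (D, d)))

lemma mem_starsF {𝒟 : Finset (Finset ℕ)} {p : Finset ℕ × ℕ} :
    p ∈ starsF 𝒟 ↔ p.1 ∈ 𝒟 ∧ p.2 ∈ p.1 := by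
  unfold starsF
  simp only [Finset.mem_biUnion, Finset.mem_image]
  constructor
  · rintro ⟨D, hD, d, hd, rfl⟩; exact ⟨hD, hd⟩
  · rintro ⟨h1, h2⟩; exact ⟨p.1, h1, p.2, h2, rfl⟩

def markedStars (𝒟 : Finset (Finset ℕ)) (R : Finset FV) : Finset (Finset ℕ × ℕ) :=
  (starsF 𝒟).filter (fun p => FV.center p.1 p.2 ∈ R)

def fullStars (𝒟 : Finset (Finset ℕ)) (s : ℕ) (R : Finset FV) : ℕ :=
  ∑ p ∈ starsF 𝒟, (if p.2 = s ∧ cnt R p.1 p.2 = p.2 then 1 else 0)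

def totc (𝒟 : Finset (Finset ℕ)) (R : Finset FV) : ℕ :=
  ∑ p ∈ markedStars 𝒟 R, cnt R p.1 p.2

def badP (𝒟 : Finset (Finset ℕ)) (R : Finset FV) : Prop :=
  ∃ p ∈ markedStars 𝒟 R, ¬ starClean p.1 p.2 R

open Classical in
noncomputable def inF (𝒟 : Finset (Finset ℕ)) (R : Finset FV) (s : ℕ) : ℕ :=
  if badP 𝒟 R ∧ totc 𝒟 R = s then 1 else 0

noncomputable def Phi (𝒟 : Finset (Finset ℕ)) (s : ℕ) (R : Finset FV) : ℕ :=
  fullStars 𝒟 s R + inF 𝒟 R s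

lemma treeClean_star {X : Finset ℕ} {R : Finset FV} {e : ℕ} (h : treeClean X R)
    (he : e ∈ X) : starClean X e R := by
  rcases h with h | h
  · exact Or.inl (h e he)
  · exact Or.inr (h e he)

lemma clean_starClean {𝒟 : Finset (Finset ℕ)} {R : Finset FV} (hc : CleanSet 𝒟 R)
    {X : Finset ℕ} {e : ℕ} (hX : X ∈ 𝒟) (he : e ∈ X) : starClean X e R :=
  treeClean_star (hc.2 X hX) he

lemma clean_inF {𝒟 : Finset (Finset ℕ)} {R : Finset FV} (hc : CleanSet 𝒟 R) (s : ℕ) :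
    inF 𝒟 R s = 0 := by
  unfold inF
  rw [if_neg]
  rintro ⟨⟨p, hp, hpc⟩, -⟩
  rw [markedStars, Finset.mem_filter, mem_starsF] at hp
  exact hpc (clean_starClean hc hp.1.1 hp.1.2)

lemma markedStars_eq {𝒟 : Finset (Finset ℕ)} {R : Finset FV} {D1 D2 D3 : Finset ℕ}
    {d1 d2 : ℕ} (h : NCd 𝒟 R D1 D2 D3 d1 d2) :
    markedStars 𝒟 R = {(D1, d1), (D2, d2)} := by
  obtain ⟨hD1, hD2, hD3, h12, h13, h23, hm1, hm2, hm3, hmo, hcl,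
    hnc1, hc3, hnco, hd1, hd2, hc1, hc2, hco, hiff, humc⟩ := h
  ext p
  rw [markedStars, Finset.mem_filter, mem_starsF]
  simp only [Finset.mem_insert, Finset.mem_singleton]
  constructor
  · rintro ⟨⟨hp1, hp2⟩, hpc⟩
    rcases hco p.1 hp1 p.2 hp2 hpc with ⟨ha, hb⟩ | ⟨ha, hb⟩
    · exact Or.inl (Prod.ext ha hb)
    · exact Or.inr (Prod.ext ha hb)
  · rintro (rfl | rfl)
    · exact ⟨⟨hD1, hd1⟩, hc1⟩
    · exact ⟨⟨hD2, hd2⟩, hc2⟩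

lemma totc_eq {𝒟 : Finset (Finset ℕ)} {R : Finset FV} {D1 D2 D3 : Finset ℕ}
    {d1 d2 : ℕ} (h : NCd 𝒟 R D1 D2 D3 d1 d2) :
    totc 𝒟 R = cnt R D1 d1 + cnt R D2 d2 := by
  have h12 : D1 ≠ D2 := h.2.2.2.1
  rw [totc, markedStars_eq h, Finset.sum_pair (by simp [h12])]

lemma badP_iff {𝒟 : Finset (Finset ℕ)} {R : Finset FV} {D1 D2 D3 : Finset ℕ}
    {d1 d2 : ℕ} (h : NCd 𝒟 R D1 D2 D3 d1 d2) :
    (badP 𝒟 R ↔ ¬ starClean D1 d1 R) := by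
  have hms := markedStars_eq h
  obtain ⟨hD1, hD2, hD3, h12, h13, h23, hm1, hm2, hm3, hmo, hcl,
    hnc1, hc3, hnco, hd1, hd2, hc1, hc2, hco, hiff, humc⟩ := h
  constructor
  · rintro ⟨p, hp, hpc⟩
    rw [hms] at hp
    simp only [Finset.mem_insert, Finset.mem_singleton] at hp
    rcases hp with rfl | rfl
    · exact hpc
    · exact fun hc => hpc (hiff.1 hc)
  · intro hc
    refine ⟨(D1, d1), ?_, hc⟩
    rw [hms]
    simp

lemma nonclean_star_marked {𝒟 : Finset (Finset ℕ)} {R : Finset FV} {D1 D2 D3 : Finset ℕ}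
    {d1 d2 : ℕ} (h : NCd 𝒟 R D1 D2 D3 d1 d2) {X : Finset ℕ} {e : ℕ}
    (hX : X ∈ 𝒟) (he : e ∈ X) (hnc : ¬ starClean X e R) :
    (X = D1 ∧ e = d1) ∨ (X = D2 ∧ e = d2) := by
  obtain ⟨hD1, hD2, hD3, h12, h13, h23, hm1, hm2, hm3, hmo, hcl,
    hnc1, hc3, hnco, hd1, hd2, hc1, hc2, hco, hiff, humc⟩ := h
  by_contra hcon
  push_neg at hcon
  apply hnc
  apply humc X hX e he
  intro hcm
  rcases hco X hX e he hcm with ⟨ha, hb⟩ | ⟨ha, hb⟩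
  · exact hcon.1 ha hb
  · exact hcon.2 ha hb

/-- congruence lemmas when leaf membership is unchanged -/
lemma starFull_congr {X : Finset ℕ} {e : ℕ} {R R' : Finset FV}
    (h : ∀ j, (FV.leaf X e j ∈ R' ↔ FV.leaf X e j ∈ R)) :
    starFull X e R' ↔ starFull X e R := by
  unfold starFull
  exact forall₂_congr (fun j _ => h j)

lemma starEmpty_congr {X : Finset ℕ} {e : ℕ} {R R' : Finset FV}
    (h : ∀ j, (FV.leaf X e j ∈ R' ↔ FV.leaf X e j ∈ R)) :
    starEmpty X e R' ↔ starEmpty X e R := by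
  unfold starEmpty
  exact forall₂_congr (fun j _ => not_congr (h j))

lemma starClean_congr {X : Finset ℕ} {e : ℕ} {R R' : Finset FV}
    (h : ∀ j, (FV.leaf X e j ∈ R' ↔ FV.leaf X e j ∈ R)) :
    starClean X e R' ↔ starClean X e R :=
  or_congr (starFull_congr h) (starEmpty_congr h)

lemma treeClean_congr {X : Finset ℕ} {R R' : Finset FV}
    (h : ∀ e j, (FV.leaf X e j ∈ R' ↔ FV.leaf X e j ∈ R)) :
    treeClean X R' ↔ treeClean X R := by
  unfold treeClean treeFull treeEmpty
  exact or_congr (forall₂_congr (fun e _ => starFull_congr (h e)))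
    (forall₂_congr (fun e _ => starEmpty_congr (h e)))

lemma treeFull_congr {X : Finset ℕ} {R R' : Finset FV}
    (h : ∀ e j, (FV.leaf X e j ∈ R' ↔ FV.leaf X e j ∈ R)) :
    treeFull X R' ↔ treeFull X R := by
  unfold treeFull
  exact forall₂_congr (fun e _ => starFull_congr (h e))

/-- In a non-leaf move between two feasible sets, cleanness is preserved. -/
lemma nonleaf_move_clean_iff {𝒟 : Finset (Finset ℕ)} {R R' : Finset FV} {v w : FV}
    (hs : stepRel R R' v w) (hfR : FeasibleSet 𝒟 R) (hfR' : FeasibleSet 𝒟 R')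
    (hvl : v.isStarLeaf = false) (hwl : w.isStarLeaf = false) :
    (CleanSet 𝒟 R ↔ CleanSet 𝒟 R') := by
  have hleaf : ∀ (X : Finset ℕ) (e j : ℕ), (FV.leaf X e j ∈ R' ↔ FV.leaf X e j ∈ R) := by
    intro X e j
    apply hs.mem_iff
    · intro h; rw [← h] at hwl; simp [FV.isStarLeaf] at hwl
    · intro h; rw [← h] at hvl; simp [FV.isStarLeaf] at hvl
  unfold CleanSet
  rw [feas_card8 hfR, feas_card8 hfR']
  simp only [true_and]
  exact forall₂_congr (fun X _ => (treeClean_congr (hleaf X)).symm)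

/-- In a non-leaf move between two non-clean feasible sets, both moved vertices are
marked centers. -/
lemma step_centers {𝒟 : Finset (Finset ℕ)} {R R' : Finset FV} {v w : FV}
    {D1 D2 D3 D1' D2' D3' : Finset ℕ} {d1 d2 d1' d2' : ℕ}
    (hs : stepRel R R' v w)
    (h8 : (R.filter (fun x => x.isStarLeaf = false)).card = 8)
    (h8' : (R'.filter (fun x => x.isStarLeaf = false)).card = 8)
    (h : NCd 𝒟 R D1 D2 D3 d1 d2) (h' : NCd 𝒟 R' D1' D2' D3' d1' d2')
    (hvl : v.isStarLeaf = false) :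
    v = FV.center D1 d1 ∨ v = FV.center D2 d2 := by
  have hvlit : v ∈ litSet D1 D2 D3 d1 d2 := by
    rw [← nonleaf_eq_lit h8 h]
    exact Finset.mem_filter.2 ⟨hs.1, hvl⟩
  have hanti : ∀ (X : Finset ℕ) (a b : ℕ), v = FV.antenna X a → FV.antenna X b ∈ R →
      a ≠ b → (a = 0 ∨ a = 1) → False := by
    intro X a b hva hbR hab ha01
    have hbv : FV.antenna X b ≠ v := by
      rw [hva]
      intro hcon
      injection hcon with h1 h2
      exact hab h2.symm
    have hbR' : FV.antenna X b ∈ R' := (hs.2.2.2.2 _).2 (Or.inr ⟨hbR, hbv⟩)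
    have hblit : FV.antenna X b ∈ litSet D1' D2' D3' d1' d2' := by
      rw [← nonleaf_eq_lit h8' h']
      exact Finset.mem_filter.2 ⟨hbR', rfl⟩
    have hXm : treeMarked X R' := by
      unfold litSet at hblit
      simp only [Finset.mem_insert, Finset.mem_singleton] at hblit
      obtain ⟨hD1', hD2', hD3', -, -, -, hm1', hm2', hm3', -⟩ := h'
      rcases hblit with hh|hh|hh|hh|hh|hh|hh|hh <;>
        first
        | (injection hh with h1 h2; rw [h1]; assumption)
        | (exfalso; exact FV.noConfusion hh)
    have hvR' : v ∈ R' := by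
      rw [hva]
      rcases ha01 with rfl | rfl
      · exact hXm.1
      · exact hXm.2
    exact hs.2.1 hvR'
  obtain ⟨hD1, hD2, hD3, h12, h13, h23, hm1, hm2, hm3, hmo, hcl,
    hnc1, hc3, hnco, hd1, hd2, hc1, hc2, hco, hiff, humc⟩ := h
  unfold litSet at hvlit
  simp only [Finset.mem_insert, Finset.mem_singleton] at hvlit
  rcases hvlit with hh|hh|hh|hh|hh|hh|hh|hh
  · exact (hanti D1 0 1 hh hm1.2 (by omega) (Or.inl rfl)).elim
  · exact (hanti D1 1 0 hh hm1.1 (by omega) (Or.inr rfl)).elim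
  · exact (hanti D2 0 1 hh hm2.2 (by omega) (Or.inl rfl)).elim
  · exact (hanti D2 1 0 hh hm2.1 (by omega) (Or.inr rfl)).elim
  · exact (hanti D3 0 1 hh hm3.2 (by omega) (Or.inl rfl)).elim
  · exact (hanti D3 1 0 hh hm3.1 (by omega) (Or.inr rfl)).elim
  · exact Or.inl hh
  · exact Or.inr hh

lemma sum_split {α : Type*} [DecidableEq α] (s : Finset α) (f : α → ℕ) {p q : α}
    (hp : p ∈ s) (hq : q ∈ s) (hne : p ≠ q) :
    ∑ x ∈ s, f x = f p + f q + ∑ x ∈ (s.erase p).erase q, f x := by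
  rw [← Finset.add_sum_erase _ f hp,
    ← Finset.add_sum_erase _ f (Finset.mem_erase.2 ⟨fun h => hne h.symm, hq⟩)]
  ring

lemma pair_card {p q : Finset ℕ × ℕ} (h : p ≠ q) : ({p, q} : Finset (Finset ℕ × ℕ)).card = 2 := by
  rw [Finset.card_insert_of_notMem (by simp [h]), Finset.card_singleton]

lemma markedStars_pair {𝒟 : Finset (Finset ℕ)} {R : Finset FV} {D1 D2 D3 : Finset ℕ}
    {d1 d2 : ℕ} (h : NCd 𝒟 R D1 D2 D3 d1 d2) {p q : Finset ℕ × ℕ}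
    (hp : p ∈ markedStars 𝒟 R) (hq : q ∈ markedStars 𝒟 R) (hpq : p ≠ q) :
    markedStars 𝒟 R = {p, q} := by
  refine (Finset.eq_of_subset_of_card_le ?_ ?_).symm
  · intro x hx
    simp only [Finset.mem_insert, Finset.mem_singleton] at hx
    rcases hx with rfl | rfl
    · exact hp
    · exact hq
  · rw [markedStars_eq h, pair_card hpq,
      pair_card (show ((D1,d1) : Finset ℕ × ℕ) ≠ (D2,d2) by simp [h.2.2.2.1])]

lemma marked_pair_iff {𝒟 : Finset (Finset ℕ)} {R : Finset FV} {D1 D2 D3 : Finset ℕ}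
    {d1 d2 : ℕ} (h : NCd 𝒟 R D1 D2 D3 d1 d2) {p q : Finset ℕ × ℕ}
    (hp : p ∈ markedStars 𝒟 R) (hq : q ∈ markedStars 𝒟 R) (hpq : p ≠ q) :
    (starClean p.1 p.2 R ↔ starClean q.1 q.2 R) := by
  have hiff := h.2.2.2.2.2.2.2.2.2.2.2.2.2.2.2.2.2.2.2.1
  rw [markedStars_eq h] at hp hq
  simp only [Finset.mem_insert, Finset.mem_singleton] at hp hq
  rcases hp with rfl | rfl <;> rcases hq with rfl | rfl
  · rfl
  · exact hiff
  · exact hiff.symm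
  · rfl

lemma marked_of_nonclean_star {𝒟 : Finset (Finset ℕ)} {R : Finset FV} {D1 D2 D3 : Finset ℕ}
    {d1 d2 : ℕ} (h : NCd 𝒟 R D1 D2 D3 d1 d2) {X : Finset ℕ} {e : ℕ}
    (hX : X ∈ 𝒟) (he : e ∈ X) (hnc : ¬ starClean X e R) :
    (X, e) ∈ markedStars 𝒟 R := by
  rw [markedStars_eq h]
  rcases nonclean_star_marked h hX he hnc with ⟨rfl, rfl⟩ | ⟨rfl, rfl⟩ <;> simp

lemma markedStars_step_eq {𝒟 : Finset (Finset ℕ)} {R R' : Finset FV}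
    {X1 X2 : Finset ℕ} {e1 e2 j1 j2 : ℕ}
    (hs : stepRel R R' (FV.leaf X1 e1 j1) (FV.leaf X2 e2 j2)) :
    markedStars 𝒟 R' = markedStars 𝒟 R := by
  unfold markedStars
  apply Finset.filter_congr
  intro p _
  exact hs.mem_iff (fun h => FV.noConfusion h) (fun h => FV.noConfusion h)

lemma fullStars_step {𝒟 : Finset (Finset ℕ)} {R R' : Finset FV}
    {X1 X2 : Finset ℕ} {e1 e2 j1 j2 : ℕ}
    (hs : stepRel R R' (FV.leaf X1 e1 j1) (FV.leaf X2 e2 j2))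
    (h1 : X1 ∈ 𝒟) (he1 : e1 ∈ X1) (h2 : X2 ∈ 𝒟) (he2 : e2 ∈ X2)
    (hne : ¬ (X1 = X2 ∧ e1 = e2)) (hj1 : j1 < e1) (hj2 : j2 < e2) (s : ℕ) :
    fullStars 𝒟 s R' + (if e1 = s ∧ cnt R X1 e1 = e1 then 1 else 0)
      = fullStars 𝒟 s R + (if e2 = s ∧ cnt R X2 e2 + 1 = e2 then 1 else 0) := by
  have hsrc := cnt_step_src hs hne hj1
  have htgt := cnt_step_tgt hs hne hj2
  have hp : ((X1, e1) : Finset ℕ × ℕ) ∈ starsF 𝒟 := mem_starsF.2 ⟨h1, he1⟩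
  have hq : ((X2, e2) : Finset ℕ × ℕ) ∈ starsF 𝒟 := mem_starsF.2 ⟨h2, he2⟩
  have hpq : ((X1, e1) : Finset ℕ × ℕ) ≠ (X2, e2) := by
    intro hcon
    rw [Prod.mk.injEq] at hcon
    exact hne hcon
  unfold fullStars
  rw [sum_split _ _ hp hq hpq, sum_split _ _ hp hq hpq]
  have htail : ∑ p ∈ ((starsF 𝒟).erase (X1, e1)).erase (X2, e2),
        (if p.2 = s ∧ cnt R' p.1 p.2 = p.2 then 1 else 0)
      = ∑ p ∈ ((starsF 𝒟).erase (X1, e1)).erase (X2, e2),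
        (if p.2 = s ∧ cnt R p.1 p.2 = p.2 then 1 else 0) := by
    apply Finset.sum_congr rfl
    intro p hpm
    have hp2 : p ≠ (X2, e2) := (Finset.mem_erase.1 hpm).1
    have hp1 : p ≠ (X1, e1) := (Finset.mem_erase.1 (Finset.mem_of_mem_erase hpm)).1
    rw [cnt_step_other hs (fun h => hp1 (Prod.ext h.1 h.2)) (fun h => hp2 (Prod.ext h.1 h.2))]
  rw [htail]
  simp only
  have hA : (if e1 = s ∧ cnt R' X1 e1 = e1 then 1 else 0) = 0 := by
    rw [if_neg]
    rintro ⟨-, hcon⟩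
    have := cnt_le R X1 e1
    omega
  have hB : (if e2 = s ∧ cnt R X2 e2 = e2 then 1 else 0) = 0 := by
    rw [if_neg]
    rintro ⟨-, hcon⟩
    have := cnt_le R' X2 e2
    omega
  rw [hA, hB, htgt]
  ring

lemma not_badP_of_marked_clean {𝒟 : Finset (Finset ℕ)} {R : Finset FV}
    {D1 D2 D3 : Finset ℕ} {d1 d2 : ℕ} (h : NCd 𝒟 R D1 D2 D3 d1 d2)
    {p : Finset ℕ × ℕ} (hp : p ∈ markedStars 𝒟 R) (hc : starClean p.1 p.2 R) :
    ¬ badP 𝒟 R := by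
  rintro ⟨q, hq, hqc⟩
  by_cases hqp : q = p
  · rw [hqp] at hqc; exact hqc hc
  · exact hqc ((marked_pair_iff h hp hq (fun hh => hqp hh.symm)).1 hc)

lemma inF_eval_true {𝒟 : Finset (Finset ℕ)} {R : Finset FV} (hb : badP 𝒟 R) {t : ℕ}
    (ht : totc 𝒟 R = t) (s : ℕ) : inF 𝒟 R s = if t = s then 1 else 0 := by
  unfold inF
  rw [ht]
  by_cases hts : t = s
  · rw [if_pos ⟨hb, hts⟩, if_pos hts]
  · rw [if_neg (fun h => hts h.2), if_neg hts]

lemma inF_congr {𝒟 : Finset (Finset ℕ)} {R R' : Finset FV}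
    (hb : badP 𝒟 R' ↔ badP 𝒟 R) (ht : totc 𝒟 R' = totc 𝒟 R) (s : ℕ) :
    inF 𝒟 R' s = inF 𝒟 R s := by
  unfold inF
  by_cases h : badP 𝒟 R ∧ totc 𝒟 R = s
  · rw [if_pos h, if_pos ⟨hb.2 h.1, by rw [ht]; exact h.2⟩]
  · rw [if_neg h, if_neg (fun hc => h ⟨hb.1 hc.1, by rw [← ht]; exact hc.2⟩)]

lemma inF_eval_false {𝒟 : Finset (Finset ℕ)} {R : Finset FV} (hb : ¬ badP 𝒟 R) (s : ℕ) :
    inF 𝒟 R s = 0 := by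
  unfold inF
  exact if_neg (fun h => hb h.1)

lemma totc_pair {𝒟 : Finset (Finset ℕ)} {R : Finset FV} {p q : Finset ℕ × ℕ}
    (hset : markedStars 𝒟 R = {p, q}) (hpq : p ≠ q) :
    totc 𝒟 R = cnt R p.1 p.2 + cnt R q.1 q.2 := by
  unfold totc
  rw [hset, Finset.sum_pair hpq]

/-- The key conservation lemma: any token jump between feasible sets preserves `Phi`. -/
lemma phi_step {𝒟 : Finset (Finset ℕ)} {R R' : Finset FV} {v w : FV}
    (h3 : ∀ D ∈ 𝒟, ∀ e ∈ D, 3 ≤ e)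
    (hvR : ∀ x ∈ R, x.valid 𝒟) (hvR' : ∀ x ∈ R', x.valid 𝒟)
    (hfR : FeasibleSet 𝒟 R) (hfR' : FeasibleSet 𝒟 R')
    (hs : stepRel R R' v w) (s : ℕ) :
    Phi 𝒟 s R' = Phi 𝒟 s R := by
  rcases step_parity hs hfR hfR' with ⟨hvl, hwl⟩ | ⟨hvl, hwl⟩
  · -- leaf move
    obtain ⟨X1, e1, j1, rfl⟩ := isLeaf_cases v hvl
    obtain ⟨X2, e2, j2, rfl⟩ := isLeaf_cases w hwl
    have hval1 := hvR _ hs.1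
    have hval2 := hvR' _ hs.2.2.1
    obtain ⟨hX1, he1, hj1⟩ := hval1
    obtain ⟨hX2, he2, hj2⟩ := hval2
    have he13 : 3 ≤ e1 := h3 X1 hX1 e1 he1
    have he23 : 3 ≤ e2 := h3 X2 hX2 e2 he2
    by_cases hsame : X1 = X2 ∧ e1 = e2
    · -- same star: nothing changes
      obtain ⟨rfl, rfl⟩ := hsame
      have hcnt : ∀ (X : Finset ℕ) (e : ℕ), cnt R' X e = cnt R X e := by
        intro X e
        by_cases hXe : X = X1 ∧ e = e1
        · obtain ⟨rfl, rfl⟩ := hXe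
          exact cnt_step_same hs hj1 hj2
        · exact cnt_step_other hs hXe hXe
      have hfse : fullStars 𝒟 s R' = fullStars 𝒟 s R := by
        unfold fullStars
        exact Finset.sum_congr rfl (fun p _ => by rw [hcnt])
      have hmse : markedStars 𝒟 R' = markedStars 𝒟 R := markedStars_step_eq hs
      have htce : totc 𝒟 R' = totc 𝒟 R := by
        unfold totc
        rw [hmse]
        exact Finset.sum_congr rfl (fun p _ => by rw [hcnt])
      have hbpe : badP 𝒟 R' ↔ badP 𝒟 R := by
        unfold badP
        rw [hmse]
        apply exists_congr
        intro p
        apply and_congr_right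
        intro _
        rw [starClean_iff_cnt, starClean_iff_cnt, hcnt]
      unfold Phi
      rw [hfse]
      congr 1
      exact inF_congr hbpe htce s
    · -- distinct stars
      have hsrc := cnt_step_src hs hsame hj1
      have htgt := cnt_step_tgt hs hsame hj2
      have hc1pos : 0 < cnt R X1 e1 := cnt_pos_of_mem hj1 hs.1
      have hc1le : cnt R X1 e1 ≤ e1 := cnt_le R X1 e1
      have hc2lt : cnt R X2 e2 + 1 ≤ e2 := by
        have := cnt_le R' X2 e2
        omega
      have hfs := fullStars_step hs hX1 he1 hX2 he2 hsame hj1 hj2 s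
      have hpq : ((X1, e1) : Finset ℕ × ℕ) ≠ (X2, e2) := by
        intro hcon; rw [Prod.mk.injEq] at hcon; exact hsame hcon
      have hsc1R : starClean X1 e1 R ↔ cnt R X1 e1 = e1 := by
        rw [starClean_iff_cnt]
        constructor
        · rintro (h | h)
          · exact h
          · omega
        · exact Or.inl
      have hsc1R' : starClean X1 e1 R' ↔ cnt R X1 e1 = 1 := by
        rw [starClean_iff_cnt]
        constructor
        · rintro (h | h) <;> omega
        · intro h; right; omega
      have hsc2R : starClean X2 e2 R ↔ cnt R X2 e2 = 0 := by
        rw [starClean_iff_cnt]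
        constructor
        · rintro (h | h) <;> omega
        · exact Or.inr
      have hsc2R' : starClean X2 e2 R' ↔ cnt R X2 e2 + 1 = e2 := by
        rw [starClean_iff_cnt, htgt]
        constructor
        · rintro (h | h) <;> omega
        · exact fun h => Or.inl h
      by_cases hclR : CleanSet 𝒟 R <;> by_cases hclR' : CleanSet 𝒟 R'
      · -- (A) clean/clean : impossible
        exfalso
        have h1 : cnt R X1 e1 = e1 := hsc1R.1 (clean_starClean hclR hX1 he1)
        have h2 : cnt R X1 e1 = 1 := hsc1R'.1 (clean_starClean hclR' hX1 he1)
        omega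
      · -- (B) clean → non-clean
        obtain ⟨D1, D2, D3, d1, d2, h'⟩ := feas_struct hfR' hclR'
        have hc1e : cnt R X1 e1 = e1 := hsc1R.1 (clean_starClean hclR hX1 he1)
        have hc2z : cnt R X2 e2 = 0 := hsc2R.1 (clean_starClean hclR hX2 he2)
        have hnc1' : ¬ starClean X1 e1 R' := by rw [hsc1R']; omega
        have hnc2' : ¬ starClean X2 e2 R' := by rw [hsc2R']; omega
        have hm1 := marked_of_nonclean_star h' hX1 he1 hnc1'
        have hm2 := marked_of_nonclean_star h' hX2 he2 hnc2'
        have hset := markedStars_pair h' hm1 hm2 hpq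
        have htc : totc 𝒟 R' = e1 := by
          rw [totc_pair hset hpq]
          simp only
          omega
        have hif' := inF_eval_true (𝒟 := 𝒟) ⟨(X1, e1), hm1, hnc1'⟩ htc s
        have hT1 : (if e1 = s ∧ cnt R X1 e1 = e1 then 1 else 0) = (if e1 = s then (1:ℕ) else 0) := by
          by_cases hes : e1 = s
          · rw [if_pos (show e1 = s ∧ cnt R X1 e1 = e1 from ⟨hes, hc1e⟩), if_pos hes]
          · rw [if_neg (fun h => hes h.1), if_neg hes]
        have hT2 : (if e2 = s ∧ cnt R X2 e2 + 1 = e2 then 1 else 0) = 0 := by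
          rw [if_neg]; rintro ⟨-, hcon⟩; omega
        rw [hT1, hT2] at hfs
        unfold Phi
        rw [hif', clean_inF hclR s]
        linarith
      · -- (C) non-clean → clean
        obtain ⟨D1, D2, D3, d1, d2, h⟩ := feas_struct hfR hclR
        have hc1e : cnt R X1 e1 = 1 := hsc1R'.1 (clean_starClean hclR' hX1 he1)
        have hc2e : cnt R X2 e2 + 1 = e2 := hsc2R'.1 (clean_starClean hclR' hX2 he2)
        have hnc1 : ¬ starClean X1 e1 R := by rw [hsc1R]; omega
        have hnc2 : ¬ starClean X2 e2 R := by rw [hsc2R]; omega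
        have hm1 := marked_of_nonclean_star h hX1 he1 hnc1
        have hm2 := marked_of_nonclean_star h hX2 he2 hnc2
        have hset := markedStars_pair h hm1 hm2 hpq
        have htc : totc 𝒟 R = e2 := by
          rw [totc_pair hset hpq]
          simp only
          omega
        have hif := inF_eval_true (𝒟 := 𝒟) ⟨(X1, e1), hm1, hnc1⟩ htc s
        have hT1 : (if e1 = s ∧ cnt R X1 e1 = e1 then 1 else 0) = 0 := by
          rw [if_neg]; rintro ⟨-, hcon⟩; omega
        have hT2 : (if e2 = s ∧ cnt R X2 e2 + 1 = e2 then 1 else 0) = (if e2 = s then (1:ℕ) else 0) := by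
          by_cases hes : e2 = s
          · rw [if_pos (show e2 = s ∧ cnt R X2 e2 + 1 = e2 from ⟨hes, hc2e⟩), if_pos hes]
          · rw [if_neg (fun h => hes h.1), if_neg hes]
        rw [hT1, hT2] at hfs
        unfold Phi
        rw [hif, clean_inF hclR' s]
        linarith
      · -- (D) non-clean → non-clean
        obtain ⟨D1, D2, D3, d1, d2, h⟩ := feas_struct hfR hclR
        obtain ⟨D1', D2', D3', d1', d2', h'⟩ := feas_struct hfR' hclR'
        have hmse : markedStars 𝒟 R' = markedStars 𝒟 R := markedStars_step_eq hs
        by_cases ha : cnt R X1 e1 = e1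
        · -- the source star was full in R
          have hnc1' : ¬ starClean X1 e1 R' := by rw [hsc1R']; omega
          have hm1' := marked_of_nonclean_star h' hX1 he1 hnc1'
          have hm1 : ((X1, e1) : Finset ℕ × ℕ) ∈ markedStars 𝒟 R := hmse ▸ hm1'
          have hc2z : cnt R X2 e2 = 0 := by
            by_contra hc2
            have hnc2 : ¬ starClean X2 e2 R := by rw [hsc2R]; omega
            have hm2 := marked_of_nonclean_star h hX2 he2 hnc2
            exact hnc2 ((marked_pair_iff h hm1 hm2 hpq).1 (hsc1R.2 ha))
          have hnc2' : ¬ starClean X2 e2 R' := by rw [hsc2R']; omega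
          have hm2' := marked_of_nonclean_star h' hX2 he2 hnc2'
          have hset' := markedStars_pair h' hm1' hm2' hpq
          have htc' : totc 𝒟 R' = e1 := by
            rw [totc_pair hset' hpq]
            simp only
            omega
          have hbadR : ¬ badP 𝒟 R := not_badP_of_marked_clean h hm1 (hsc1R.2 ha)
          have hif' := inF_eval_true (𝒟 := 𝒟) ⟨(X1, e1), hm1', hnc1'⟩ htc' s
          have hT1 : (if e1 = s ∧ cnt R X1 e1 = e1 then 1 else 0) = (if e1 = s then (1:ℕ) else 0) := by
            by_cases hes : e1 = s
            · rw [if_pos (show e1 = s ∧ cnt R X1 e1 = e1 from ⟨hes, ha⟩), if_pos hes]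
            · rw [if_neg (fun h => hes h.1), if_neg hes]
          have hT2 : (if e2 = s ∧ cnt R X2 e2 + 1 = e2 then 1 else 0) = 0 := by
            rw [if_neg]; rintro ⟨-, hcon⟩; omega
          rw [hT1, hT2] at hfs
          unfold Phi
          rw [hif', inF_eval_false hbadR s]
          linarith
        · by_cases hb : cnt R X2 e2 + 1 = e2
          · -- the target star becomes full in R'
            have hnc2 : ¬ starClean X2 e2 R := by rw [hsc2R]; omega
            have hm2 := marked_of_nonclean_star h hX2 he2 hnc2
            have hm2' : ((X2, e2) : Finset ℕ × ℕ) ∈ markedStars 𝒟 R' := hmse.symm ▸ hm2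
            have hc1z : cnt R X1 e1 = 1 := by
              by_contra hc1
              have hnc1' : ¬ starClean X1 e1 R' := by rw [hsc1R']; omega
              have hm1' := marked_of_nonclean_star h' hX1 he1 hnc1'
              exact hnc1' ((marked_pair_iff h' hm2' hm1' (fun hh => hpq hh.symm)).1 (hsc2R'.2 hb))
            have hnc1 : ¬ starClean X1 e1 R := by rw [hsc1R]; omega
            have hm1 := marked_of_nonclean_star h hX1 he1 hnc1
            have hset := markedStars_pair h hm1 hm2 hpq
            have htc : totc 𝒟 R = e2 := by
              rw [totc_pair hset hpq]
              simp only
              omega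
            have hbadR' : ¬ badP 𝒟 R' := not_badP_of_marked_clean h' hm2' (hsc2R'.2 hb)
            have hif := inF_eval_true (𝒟 := 𝒟) ⟨(X1, e1), hm1, hnc1⟩ htc s
            have hT1 : (if e1 = s ∧ cnt R X1 e1 = e1 then 1 else 0) = 0 := by
              rw [if_neg]; rintro ⟨-, hcon⟩; omega
            have hT2 : (if e2 = s ∧ cnt R X2 e2 + 1 = e2 then 1 else 0) = (if e2 = s then (1:ℕ) else 0) := by
              by_cases hes : e2 = s
              · rw [if_pos (show e2 = s ∧ cnt R X2 e2 + 1 = e2 from ⟨hes, hb⟩), if_pos hes]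
              · rw [if_neg (fun h => hes h.1), if_neg hes]
            rw [hT1, hT2] at hfs
            unfold Phi
            rw [hif, inF_eval_false hbadR' s]
            linarith
          · -- neither : both stars stay dirty
            have hnc1 : ¬ starClean X1 e1 R := by rw [hsc1R]; omega
            have hnc2' : ¬ starClean X2 e2 R' := by rw [hsc2R']; omega
            have hm1 := marked_of_nonclean_star h hX1 he1 hnc1
            have hm2' := marked_of_nonclean_star h' hX2 he2 hnc2'
            have hm2 : ((X2, e2) : Finset ℕ × ℕ) ∈ markedStars 𝒟 R := hmse ▸ hm2'
            have hm1' : ((X1, e1) : Finset ℕ × ℕ) ∈ markedStars 𝒟 R' := hmse.symm ▸ hm1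
            have hset := markedStars_pair h hm1 hm2 hpq
            have hset' := markedStars_pair h' hm1' hm2' hpq
            have htc : totc 𝒟 R = cnt R X1 e1 + cnt R X2 e2 := by
              rw [totc_pair hset hpq]
            have htc' : totc 𝒟 R' = cnt R X1 e1 + cnt R X2 e2 := by
              rw [totc_pair hset' hpq]
              simp only
              omega
            have hif := inF_eval_true (𝒟 := 𝒟) ⟨(X1, e1), hm1, hnc1⟩ htc s
            have hif' := inF_eval_true (𝒟 := 𝒟) ⟨(X2, e2), hm2', hnc2'⟩ htc' s
            have hT1 : (if e1 = s ∧ cnt R X1 e1 = e1 then 1 else 0) = 0 := by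
              rw [if_neg]; rintro ⟨-, hcon⟩; omega
            have hT2 : (if e2 = s ∧ cnt R X2 e2 + 1 = e2 then 1 else 0) = 0 := by
              rw [if_neg]; rintro ⟨-, hcon⟩; omega
            rw [hT1, hT2] at hfs
            unfold Phi
            rw [hif, hif']
            linarith
  · -- non-leaf move
    have hleaf : ∀ (X : Finset ℕ) (e j : ℕ), (FV.leaf X e j ∈ R' ↔ FV.leaf X e j ∈ R) := by
      intro X e j
      apply hs.mem_iff
      · intro h; rw [← h] at hwl; simp [FV.isStarLeaf] at hwl
      · intro h; rw [← h] at hvl; simp [FV.isStarLeaf] at hvl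
    have hcnt : ∀ (X : Finset ℕ) (e : ℕ), cnt R' X e = cnt R X e := by
      intro X e
      unfold cnt
      congr 1
      exact Finset.filter_congr (fun j _ => hleaf X e j)
    have hfse : fullStars 𝒟 s R' = fullStars 𝒟 s R := by
      unfold fullStars
      exact Finset.sum_congr rfl (fun p _ => by rw [hcnt])
    have hclean : CleanSet 𝒟 R ↔ CleanSet 𝒟 R' := nonleaf_move_clean_iff hs hfR hfR' hvl hwl
    by_cases hclR : CleanSet 𝒟 R
    · unfold Phi
      rw [hfse, clean_inF hclR, clean_inF (hclean.1 hclR)]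
    · have hclR' : ¬ CleanSet 𝒟 R' := fun h => hclR (hclean.2 h)
      obtain ⟨D1, D2, D3, d1, d2, h⟩ := feas_struct hfR hclR
      obtain ⟨D1', D2', D3', d1', d2', h'⟩ := feas_struct hfR' hclR'
      have hvc := step_centers hs (feas_card8 hfR) (feas_card8 hfR') h h' hvl
      have hwc := step_centers hs.symm (feas_card8 hfR') (feas_card8 hfR) h' h hwl
      have hscc : ∀ (X : Finset ℕ) (e : ℕ), starClean X e R' ↔ starClean X e R := by
        intro X e
        exact starClean_congr (hleaf X e)
      -- the star whose centre we removed is unmarked in R', hence clean in both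
      have hbadR : ¬ badP 𝒟 R := by
        rintro ⟨p, hp, hpc⟩
        have hiffp : ∀ q ∈ markedStars 𝒟 R, ¬ starClean q.1 q.2 R := by
          intro q hq
          by_cases hqp : q = p
          · rw [hqp]; exact hpc
          · intro hqc
            exact hpc ((marked_pair_iff h hp hq (fun hh => hqp hh.symm)).2 hqc)
        -- v is the centre of a marked star of R; it is unmarked in R', so clean in R', so clean in R
        rcases hvc with hv1 | hv1
        · have hmem : ((D1, d1) : Finset ℕ × ℕ) ∈ markedStars 𝒟 R := by
            rw [markedStars_eq h]; simp
          apply hiffp _ hmem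
          rw [← hscc]
          apply h'.2.2.2.2.2.2.2.2.2.2.2.2.2.2.2.2.2.2.2.2 D1 h.1 d1 h.2.2.2.2.2.2.2.2.2.2.2.2.2.2.1
          rw [← hv1]
          exact hs.2.1
        · have hmem : ((D2, d2) : Finset ℕ × ℕ) ∈ markedStars 𝒟 R := by
            rw [markedStars_eq h]; simp
          apply hiffp _ hmem
          rw [← hscc]
          apply h'.2.2.2.2.2.2.2.2.2.2.2.2.2.2.2.2.2.2.2.2 D2 h.2.1 d2 h.2.2.2.2.2.2.2.2.2.2.2.2.2.2.2.1
          rw [← hv1]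
          exact hs.2.1
      have hbadR' : ¬ badP 𝒟 R' := by
        rintro ⟨p, hp, hpc⟩
        have hiffp : ∀ q ∈ markedStars 𝒟 R', ¬ starClean q.1 q.2 R' := by
          intro q hq
          by_cases hqp : q = p
          · rw [hqp]; exact hpc
          · intro hqc
            exact hpc ((marked_pair_iff h' hp hq (fun hh => hqp hh.symm)).2 hqc)
        rcases hwc with hw1 | hw1
        · have hmem : ((D1', d1') : Finset ℕ × ℕ) ∈ markedStars 𝒟 R' := by
            rw [markedStars_eq h']; simp
          apply hiffp _ hmem
          rw [hscc]
          apply h.2.2.2.2.2.2.2.2.2.2.2.2.2.2.2.2.2.2.2.2 D1' h'.1 d1' h'.2.2.2.2.2.2.2.2.2.2.2.2.2.2.1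
          rw [← hw1]
          exact hs.2.2.2.1
        · have hmem : ((D2', d2') : Finset ℕ × ℕ) ∈ markedStars 𝒟 R' := by
            rw [markedStars_eq h']; simp
          apply hiffp _ hmem
          rw [hscc]
          apply h.2.2.2.2.2.2.2.2.2.2.2.2.2.2.2.2.2.2.2.2 D2' h'.2.1 d2' h'.2.2.2.2.2.2.2.2.2.2.2.2.2.2.2.1
          rw [← hw1]
          exact hs.2.2.2.1
      unfold Phi inF
      rw [hfse, if_neg (fun hh => hbadR' hh.1), if_neg (fun hh => hbadR hh.1)]

/-! ### Moved leaves belong to marked trees; antennae never move inside a phase -/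

lemma moved_leaf_marked_aux {𝒟 : Finset (Finset ℕ)} {R R' : Finset FV}
    (h3 : ∀ D ∈ 𝒟, ∀ e ∈ D, 3 ≤ e)
    (hvR : ∀ x ∈ R, x.valid 𝒟) (hvR' : ∀ x ∈ R', x.valid 𝒟)
    (hfR : FeasibleSet 𝒟 R) (hfR' : FeasibleSet 𝒟 R')
    {X : Finset ℕ} {e jj : ℕ} {w : FV} (hs : stepRel R R' (FV.leaf X e jj) w) :
    X ∈ 𝒟 ∧ ((¬ CleanSet 𝒟 R ∧ treeMarked X R) ∨ (¬ CleanSet 𝒟 R' ∧ treeMarked X R')) := by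
  obtain ⟨hX, he, hj⟩ := hvR _ hs.1
  have he3 : 3 ≤ e := h3 X hX e he
  rcases step_parity hs hfR hfR' with ⟨-, hwl⟩ | ⟨hvl, -⟩
  swap
  · simp [FV.isStarLeaf] at hvl
  obtain ⟨X2, e2, j2, rfl⟩ := isLeaf_cases w hwl
  obtain ⟨hX2, he2, hj2⟩ := hvR' _ hs.2.2.1
  have hc1pos : 0 < cnt R X e := cnt_pos_of_mem hj hs.1
  have hside : ¬ starClean X e R ∨ ¬ starClean X e R' := by
    by_cases hsame : X = X2 ∧ e = e2
    · obtain ⟨rfl, rfl⟩ := hsame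
      have hlt : cnt R X e < e := cnt_lt_of_not_mem hj2 hs.2.2.2.1
      left
      rw [starClean_iff_cnt]
      omega
    · have hsrc := cnt_step_src hs hsame hj
      have hle := cnt_le R X e
      by_cases hcl : starClean X e R
      · right
        rw [starClean_iff_cnt] at hcl ⊢
        omega
      · exact Or.inl hcl
  rcases hside with hside | hside
  · have hclR : ¬ CleanSet 𝒟 R := fun hc => hside (clean_starClean hc hX he)
    obtain ⟨D1, D2, D3, d1, d2, h⟩ := feas_struct hfR hclR
    refine ⟨hX, Or.inl ⟨hclR, ?_⟩⟩
    rcases nonclean_star_marked h hX he hside with ⟨hXe, -⟩ | ⟨hXe, -⟩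
    · rw [hXe]; exact h.2.2.2.2.2.2.1
    · rw [hXe]; exact h.2.2.2.2.2.2.2.1
  · have hclR' : ¬ CleanSet 𝒟 R' := fun hc => hside (clean_starClean hc hX he)
    obtain ⟨D1, D2, D3, d1, d2, h'⟩ := feas_struct hfR' hclR'
    refine ⟨hX, Or.inr ⟨hclR', ?_⟩⟩
    rcases nonclean_star_marked h' hX he hside with ⟨hXe, -⟩ | ⟨hXe, -⟩
    · rw [hXe]; exact h'.2.2.2.2.2.2.1
    · rw [hXe]; exact h'.2.2.2.2.2.2.2.1

lemma moved_leaf_marked {𝒟 : Finset (Finset ℕ)} {R R' : Finset FV} {v w : FV}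
    (h3 : ∀ D ∈ 𝒟, ∀ e ∈ D, 3 ≤ e)
    (hvR : ∀ x ∈ R, x.valid 𝒟) (hvR' : ∀ x ∈ R', x.valid 𝒟)
    (hfR : FeasibleSet 𝒟 R) (hfR' : FeasibleSet 𝒟 R')
    (hs : stepRel R R' v w) {X : Finset ℕ} {e jj : ℕ}
    (hch : ¬ (FV.leaf X e jj ∈ R' ↔ FV.leaf X e jj ∈ R)) :
    X ∈ 𝒟 ∧ ((¬ CleanSet 𝒟 R ∧ treeMarked X R) ∨ (¬ CleanSet 𝒟 R' ∧ treeMarked X R')) := by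
  have hvw : FV.leaf X e jj = v ∨ FV.leaf X e jj = w := by
    by_contra hcon
    push_neg at hcon
    exact hch (hs.mem_iff hcon.2 hcon.1)
  rcases hvw with hv | hw
  · exact moved_leaf_marked_aux h3 hvR hvR' hfR hfR' (hv ▸ hs)
  · have := moved_leaf_marked_aux h3 hvR' hvR hfR' hfR (hw ▸ hs.symm)
    exact ⟨this.1, this.2.symm⟩

lemma step_antenna_eq {𝒟 : Finset (Finset ℕ)} {R R' : Finset FV} {v w : FV}
    (hs : stepRel R R' v w) (hfR : FeasibleSet 𝒟 R) (hfR' : FeasibleSet 𝒟 R')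
    (hncc : ¬ CleanSet 𝒟 R ∨ ¬ CleanSet 𝒟 R') (X : Finset ℕ) (a : ℕ) :
    (FV.antenna X a ∈ R' ↔ FV.antenna X a ∈ R) := by
  rcases step_parity hs hfR hfR' with ⟨hvl, hwl⟩ | ⟨hvl, hwl⟩
  · apply hs.mem_iff
    · intro hcon; rw [← hcon] at hwl; simp [FV.isStarLeaf] at hwl
    · intro hcon; rw [← hcon] at hvl; simp [FV.isStarLeaf] at hvl
  · have hcliff := nonleaf_move_clean_iff hs hfR hfR' hvl hwl
    have hclR : ¬ CleanSet 𝒟 R := by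
      rcases hncc with h | h
      · exact h
      · exact fun hc => h (hcliff.1 hc)
    have hclR' : ¬ CleanSet 𝒟 R' := fun hc => hclR (hcliff.2 hc)
    obtain ⟨D1, D2, D3, d1, d2, h⟩ := feas_struct hfR hclR
    obtain ⟨D1', D2', D3', d1', d2', h'⟩ := feas_struct hfR' hclR'
    have hvc := step_centers hs (feas_card8 hfR) (feas_card8 hfR') h h' hvl
    have hwc := step_centers hs.symm (feas_card8 hfR') (feas_card8 hfR) h' h hwl
    apply hs.mem_iff
    · rcases hwc with hw1 | hw1 <;> (rw [hw1]; exact fun hcon => FV.noConfusion hcon)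
    · rcases hvc with hv1 | hv1 <;> (rw [hv1]; exact fun hcon => FV.noConfusion hcon)

lemma treeMarked_congr {X : Finset ℕ} {R R' : Finset FV}
    (h : ∀ a, (FV.antenna X a ∈ R' ↔ FV.antenna X a ∈ R)) :
    (treeMarked X R' ↔ treeMarked X R) :=
  and_congr (h 0) (h 1)

/-! ### Counting full stars of a clean set, and the endgame case analysis -/

lemma fullStars_clean_count {𝒟 : Finset (Finset ℕ)} {R : Finset FV}
    (h3 : ∀ D ∈ 𝒟, ∀ e ∈ D, 3 ≤ e) (hc : CleanSet 𝒟 R) (s : ℕ) :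
    fullStars 𝒟 s R = ∑ X ∈ 𝒟, (if s ∈ X ∧ treeFull X R then 1 else 0) := by
  unfold fullStars starsF
  rw [Finset.sum_biUnion]
  · apply Finset.sum_congr rfl
    intro D hD
    rw [Finset.sum_image (fun x _ y _ hxy => by simpa using hxy)]
    simp only
    have hrw : ∀ d ∈ D, (if d = s ∧ cnt R D d = d then (1:ℕ) else 0)
        = (if d = s then (if cnt R D d = d then 1 else 0) else 0) := by
      intro d _
      by_cases hds : d = s
      · simp [hds]
      · simp [hds]
    rw [Finset.sum_congr rfl hrw, Finset.sum_ite_eq' D s (fun d => if cnt R D d = d then 1 else 0)]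
    by_cases hsD : s ∈ D
    · rw [if_pos hsD]
      have hiff : cnt R D s = s ↔ treeFull D R := by
        constructor
        · intro hcnt
          rcases hc.2 D hD with hf | he
          · exact hf
          · exfalso
            have := starEmpty_iff_cnt.1 (he s hsD)
            have := h3 D hD s hsD
            omega
        · intro hf
          exact starFull_iff_cnt.1 (hf s hsD)
      by_cases hfull : treeFull D R
      · rw [if_pos (hiff.2 hfull), if_pos ⟨hsD, hfull⟩]
      · rw [if_neg (fun hcon => hfull (hiff.1 hcon)), if_neg (fun hcon => hfull hcon.2)]
    · rw [if_neg hsD, if_neg (fun hcon => hsD hcon.1)]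
  · intro D hD D' hD' hne
    apply Finset.disjoint_left.2
    intro p hp hp'
    simp only [Finset.mem_image] at hp hp'
    obtain ⟨d, -, rfl⟩ := hp
    obtain ⟨d', -, hd'⟩ := hp'
    injection hd' with h1 h2
    exact hne h1.symm

lemma ne_witness {A B : Finset ℕ} (h : A ≠ B) :
    ∃ s, (s ∈ A ∧ s ∉ B) ∨ (s ∈ B ∧ s ∉ A) := by
  by_contra hcon
  push_neg at hcon
  apply h
  ext x
  exact ⟨fun hx => (hcon x).1 hx, fun hx => (hcon x).2 hx⟩

lemma ite_le_ite {P q q' : Prop} [Decidable P] [Decidable q] [Decidable q'] (h : q' → q) :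
    (if P ∧ q' then (1:ℕ) else 0) ≤ (if P ∧ q then 1 else 0) := by
  split_ifs with h1 h2
  · omega
  · exact absurd ⟨h1.1, h h1.2⟩ h2
  · omega
  · omega

lemma no_lone_A {A B C : Finset ℕ} (hne : A.Nonempty)
    {p p' q q' r r' : Prop} [Decidable p] [Decidable p'] [Decidable q] [Decidable q']
    [Decidable r] [Decidable r']
    (E : (∀ s : ℕ, (((if s ∈ A ∧ p' then 1 else 0) + (if s ∈ B ∧ q' then 1 else 0) + (if s ∈ C ∧ r' then 1 else 0) : ℕ)
      = (if s ∈ A ∧ p then 1 else 0) + (if s ∈ B ∧ q then 1 else 0) + (if s ∈ C ∧ r then 1 else 0))))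
    (hp : p) (hp' : ¬ p') (hq : q' → q) (hr : r' → r) : False := by
  obtain ⟨s, hs⟩ := hne
  have hE := E s
  rw [if_neg (show ¬ (s ∈ A ∧ p') from fun h => hp' h.2),
    if_pos (show s ∈ A ∧ p from ⟨hs, hp⟩)] at hE
  have h1 := ite_le_ite (P := s ∈ B) hq
  have h2 := ite_le_ite (P := s ∈ C) hr
  linarith

lemma no_lone_B {A B C : Finset ℕ} (hne : B.Nonempty)
    {p p' q q' r r' : Prop} [Decidable p] [Decidable p'] [Decidable q] [Decidable q']
    [Decidable r] [Decidable r']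
    (E : (∀ s : ℕ, (((if s ∈ A ∧ q' then 1 else 0) + (if s ∈ B ∧ p' then 1 else 0) + (if s ∈ C ∧ r' then 1 else 0) : ℕ)
      = (if s ∈ A ∧ q then 1 else 0) + (if s ∈ B ∧ p then 1 else 0) + (if s ∈ C ∧ r then 1 else 0))))
    (hp : p) (hp' : ¬ p') (hq : q' → q) (hr : r' → r) : False := by
  obtain ⟨s, hs⟩ := hne
  have hE := E s
  rw [if_neg (show ¬ (s ∈ B ∧ p') from fun h => hp' h.2),
    if_pos (show s ∈ B ∧ p from ⟨hs, hp⟩)] at hE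
  have h1 := ite_le_ite (P := s ∈ A) hq
  have h2 := ite_le_ite (P := s ∈ C) hr
  linarith

lemma no_lone_C {A B C : Finset ℕ} (hne : C.Nonempty)
    {p p' q q' r r' : Prop} [Decidable p] [Decidable p'] [Decidable q] [Decidable q']
    [Decidable r] [Decidable r']
    (E : (∀ s : ℕ, (((if s ∈ A ∧ q' then 1 else 0) + (if s ∈ B ∧ r' then 1 else 0) + (if s ∈ C ∧ p' then 1 else 0) : ℕ)
      = (if s ∈ A ∧ q then 1 else 0) + (if s ∈ B ∧ r then 1 else 0) + (if s ∈ C ∧ p then 1 else 0))))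
    (hp : p) (hp' : ¬ p') (hq : q' → q) (hr : r' → r) : False := by
  obtain ⟨s, hs⟩ := hne
  have hE := E s
  rw [if_neg (show ¬ (s ∈ C ∧ p') from fun h => hp' h.2),
    if_pos (show s ∈ C ∧ p from ⟨hs, hp⟩)] at hE
  have h1 := ite_le_ite (P := s ∈ A) hq
  have h2 := ite_le_ite (P := s ∈ B) hr
  linarith

lemma no_swap_AB {A B C : Finset ℕ} (hne : A ≠ B)
    {p p' q q' r r' : Prop} [Decidable p] [Decidable p'] [Decidable q] [Decidable q']
    [Decidable r] [Decidable r']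
    (E : (∀ s : ℕ, (((if s ∈ A ∧ p' then 1 else 0) + (if s ∈ B ∧ q' then 1 else 0) + (if s ∈ C ∧ r' then 1 else 0) : ℕ)
      = (if s ∈ A ∧ p then 1 else 0) + (if s ∈ B ∧ q then 1 else 0) + (if s ∈ C ∧ r then 1 else 0))))
    (hp : p) (hp' : ¬ p') (hq : ¬ q) (hq' : q') (hr : r ↔ r') : False := by
  obtain ⟨s, h⟩ := ne_witness hne
  have hiff : (if s ∈ C ∧ r' then (1:ℕ) else 0) = (if s ∈ C ∧ r then 1 else 0) :=
    if_congr (and_congr_right fun _ => hr.symm) rfl rfl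
  have hE := E s
  rcases h with ⟨hs1, hs2⟩ | ⟨hs1, hs2⟩
  · rw [hiff, if_neg (show ¬ (s ∈ A ∧ p') from fun hh => hp' hh.2),
      if_pos (show s ∈ A ∧ p from ⟨hs1, hp⟩),
      if_neg (show ¬ (s ∈ B ∧ q') from fun hh => hs2 hh.1),
      if_neg (show ¬ (s ∈ B ∧ q) from fun hh => hs2 hh.1)] at hE
    linarith
  · rw [hiff, if_neg (show ¬ (s ∈ A ∧ p') from fun hh => hs2 hh.1),
      if_neg (show ¬ (s ∈ A ∧ p) from fun hh => hs2 hh.1),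
      if_pos (show s ∈ B ∧ q' from ⟨hs1, hq'⟩),
      if_neg (show ¬ (s ∈ B ∧ q) from fun hh => hq hh.2)] at hE
    linarith

lemma no_swap_AC {A B C : Finset ℕ} (hne : A ≠ C)
    {p p' q q' r r' : Prop} [Decidable p] [Decidable p'] [Decidable q] [Decidable q']
    [Decidable r] [Decidable r']
    (E : (∀ s : ℕ, (((if s ∈ A ∧ p' then 1 else 0) + (if s ∈ B ∧ r' then 1 else 0) + (if s ∈ C ∧ q' then 1 else 0) : ℕ)
      = (if s ∈ A ∧ p then 1 else 0) + (if s ∈ B ∧ r then 1 else 0) + (if s ∈ C ∧ q then 1 else 0))))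
    (hp : p) (hp' : ¬ p') (hq : ¬ q) (hq' : q') (hr : r ↔ r') : False := by
  obtain ⟨s, h⟩ := ne_witness hne
  have hiff : (if s ∈ B ∧ r' then (1:ℕ) else 0) = (if s ∈ B ∧ r then 1 else 0) :=
    if_congr (and_congr_right fun _ => hr.symm) rfl rfl
  have hE := E s
  rcases h with ⟨hs1, hs2⟩ | ⟨hs1, hs2⟩
  · rw [hiff, if_neg (show ¬ (s ∈ A ∧ p') from fun hh => hp' hh.2),
      if_pos (show s ∈ A ∧ p from ⟨hs1, hp⟩),
      if_neg (show ¬ (s ∈ C ∧ q') from fun hh => hs2 hh.1),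
      if_neg (show ¬ (s ∈ C ∧ q) from fun hh => hs2 hh.1)] at hE
    linarith
  · rw [hiff, if_neg (show ¬ (s ∈ A ∧ p') from fun hh => hs2 hh.1),
      if_neg (show ¬ (s ∈ A ∧ p) from fun hh => hs2 hh.1),
      if_pos (show s ∈ C ∧ q' from ⟨hs1, hq'⟩),
      if_neg (show ¬ (s ∈ C ∧ q) from fun hh => hq hh.2)] at hE
    linarith

lemma no_swap_BC {A B C : Finset ℕ} (hne : B ≠ C)
    {p p' q q' r r' : Prop} [Decidable p] [Decidable p'] [Decidable q] [Decidable q']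
    [Decidable r] [Decidable r']
    (E : (∀ s : ℕ, (((if s ∈ A ∧ r' then 1 else 0) + (if s ∈ B ∧ p' then 1 else 0) + (if s ∈ C ∧ q' then 1 else 0) : ℕ)
      = (if s ∈ A ∧ r then 1 else 0) + (if s ∈ B ∧ p then 1 else 0) + (if s ∈ C ∧ q then 1 else 0))))
    (hp : p) (hp' : ¬ p') (hq : ¬ q) (hq' : q') (hr : r ↔ r') : False := by
  obtain ⟨s, h⟩ := ne_witness hne
  have hiff : (if s ∈ A ∧ r' then (1:ℕ) else 0) = (if s ∈ A ∧ r then 1 else 0) :=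
    if_congr (and_congr_right fun _ => hr.symm) rfl rfl
  have hE := E s
  rcases h with ⟨hs1, hs2⟩ | ⟨hs1, hs2⟩
  · rw [hiff, if_neg (show ¬ (s ∈ B ∧ p') from fun hh => hp' hh.2),
      if_pos (show s ∈ B ∧ p from ⟨hs1, hp⟩),
      if_neg (show ¬ (s ∈ C ∧ q') from fun hh => hs2 hh.1),
      if_neg (show ¬ (s ∈ C ∧ q) from fun hh => hs2 hh.1)] at hE
    linarith
  · rw [hiff, if_neg (show ¬ (s ∈ B ∧ p') from fun hh => hs2 hh.1),
      if_neg (show ¬ (s ∈ B ∧ p) from fun hh => hs2 hh.1),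
      if_pos (show s ∈ C ∧ q' from ⟨hs1, hq'⟩),
      if_neg (show ¬ (s ∈ C ∧ q) from fun hh => hq hh.2)] at hE
    linarith

lemma endgame {A B C : Finset ℕ} (hAB : A ≠ B) (hAC : A ≠ C) (hBC : B ≠ C)
    (hAne : A.Nonempty) (hBne : B.Nonempty) (hCne : C.Nonempty)
    (a a' b b' c c' : Prop) [Decidable a] [Decidable a'] [Decidable b] [Decidable b']
    [Decidable c] [Decidable c']
    (E : ∀ s : ℕ, ((if s ∈ A ∧ a' then 1 else 0) + (if s ∈ B ∧ b' then 1 else 0)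
        + (if s ∈ C ∧ c' then 1 else 0) : ℕ)
      = (if s ∈ A ∧ a then 1 else 0) + (if s ∈ B ∧ b then 1 else 0)
        + (if s ∈ C ∧ c then 1 else 0))
    (hne : ¬ ((a ↔ a') ∧ (b ↔ b') ∧ (c ↔ c'))) :
    (a ∧ ¬a' ∧ ¬b ∧ b' ∧ ¬c ∧ c') ∨ (b ∧ ¬b' ∧ ¬a ∧ a' ∧ ¬c ∧ c')
    ∨ (c ∧ ¬c' ∧ ¬a ∧ a' ∧ ¬b ∧ b')
    ∨ (¬a ∧ a' ∧ b ∧ ¬b' ∧ c ∧ ¬c') ∨ (¬b ∧ b' ∧ a ∧ ¬a' ∧ c ∧ ¬c')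
    ∨ (¬c ∧ c' ∧ a ∧ ¬a' ∧ b ∧ ¬b') := by
  by_cases ha : a
  · by_cases ha' : a'
    · by_cases hb : b
      · by_cases hb' : b'
        · by_cases hc : c
          · by_cases hc' : c'
            · exact absurd ⟨(iff_of_true ha ha'), (iff_of_true hb hb'), (iff_of_true hc hc')⟩ hne
            · exact (no_lone_C hCne E hc hc' (fun _ => ha) (fun _ => hb)).elim
          · by_cases hc' : c'
            · exact (no_lone_C hCne (fun s => (E s).symm) hc' hc (fun _ => ha') (fun _ => hb')).elim
            · exact absurd ⟨(iff_of_true ha ha'), (iff_of_true hb hb'), (iff_of_false hc hc')⟩ hne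
        · by_cases hc : c
          · by_cases hc' : c'
            · exact (no_lone_B hBne E hb hb' (fun _ => ha) (fun _ => hc)).elim
            · exact (no_lone_B hBne E hb hb' (fun _ => ha) (fun hh => absurd hh hc')).elim
          · by_cases hc' : c'
            · exact (no_swap_BC hBC E hb hb' hc hc' (iff_of_true ha ha')).elim
            · exact (no_lone_B hBne E hb hb' (fun _ => ha) (fun hh => absurd hh hc')).elim
      · by_cases hb' : b'
        · by_cases hc : c
          · by_cases hc' : c'
            · exact (no_lone_B hBne (fun s => (E s).symm) hb' hb (fun _ => ha') (fun _ => hc')).elim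
            · exact (no_swap_BC hBC (fun s => (E s).symm) hb' hb hc' hc (iff_of_true ha' ha)).elim
          · by_cases hc' : c'
            · exact (no_lone_B hBne (fun s => (E s).symm) hb' hb (fun _ => ha') (fun hh => absurd hh hc)).elim
            · exact (no_lone_B hBne (fun s => (E s).symm) hb' hb (fun _ => ha') (fun hh => absurd hh hc)).elim
        · by_cases hc : c
          · by_cases hc' : c'
            · exact absurd ⟨(iff_of_true ha ha'), (iff_of_false hb hb'), (iff_of_true hc hc')⟩ hne
            · exact (no_lone_C hCne E hc hc' (fun _ => ha) (fun hh => absurd hh hb')).elim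
          · by_cases hc' : c'
            · exact (no_lone_C hCne (fun s => (E s).symm) hc' hc (fun _ => ha') (fun hh => absurd hh hb)).elim
            · exact absurd ⟨(iff_of_true ha ha'), (iff_of_false hb hb'), (iff_of_false hc hc')⟩ hne
    · by_cases hb : b
      · by_cases hb' : b'
        · by_cases hc : c
          · by_cases hc' : c'
            · exact (no_lone_A hAne E ha ha' (fun _ => hb) (fun _ => hc)).elim
            · exact (no_lone_A hAne E ha ha' (fun _ => hb) (fun hh => absurd hh hc')).elim
          · by_cases hc' : c'
            · exact (no_swap_AC hAC E ha ha' hc hc' (iff_of_true hb hb')).elim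
            · exact (no_lone_A hAne E ha ha' (fun _ => hb) (fun hh => absurd hh hc')).elim
        · by_cases hc : c
          · by_cases hc' : c'
            · exact (no_lone_A hAne E ha ha' (fun hh => absurd hh hb') (fun _ => hc)).elim
            · exact (no_lone_A hAne E ha ha' (fun hh => absurd hh hb') (fun hh => absurd hh hc')).elim
          · by_cases hc' : c'
            · exact Or.inr (Or.inr (Or.inr (Or.inr (Or.inr (⟨hc, hc', ha, ha', hb, hb'⟩)))))
            · exact (no_lone_A hAne E ha ha' (fun hh => absurd hh hb') (fun hh => absurd hh hc')).elim
      · by_cases hb' : b'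
        · by_cases hc : c
          · by_cases hc' : c'
            · exact (no_swap_AB hAB E ha ha' hb hb' (iff_of_true hc hc')).elim
            · exact Or.inr (Or.inr (Or.inr (Or.inr (Or.inl ⟨hb, hb', ha, ha', hc, hc'⟩))))
          · by_cases hc' : c'
            · exact Or.inl ⟨ha, ha', hb, hb', hc, hc'⟩
            · exact (no_swap_AB hAB E ha ha' hb hb' (iff_of_false hc hc')).elim
        · by_cases hc : c
          · by_cases hc' : c'
            · exact (no_lone_A hAne E ha ha' (fun hh => absurd hh hb') (fun _ => hc)).elim
            · exact (no_lone_A hAne E ha ha' (fun hh => absurd hh hb') (fun hh => absurd hh hc')).elim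
          · by_cases hc' : c'
            · exact (no_swap_AC hAC E ha ha' hc hc' (iff_of_false hb hb')).elim
            · exact (no_lone_A hAne E ha ha' (fun hh => absurd hh hb') (fun hh => absurd hh hc')).elim
  · by_cases ha' : a'
    · by_cases hb : b
      · by_cases hb' : b'
        · by_cases hc : c
          · by_cases hc' : c'
            · exact (no_lone_A hAne (fun s => (E s).symm) ha' ha (fun _ => hb') (fun _ => hc')).elim
            · exact (no_swap_AC hAC (fun s => (E s).symm) ha' ha hc' hc (iff_of_true hb' hb)).elim
          · by_cases hc' : c'
            · exact (no_lone_A hAne (fun s => (E s).symm) ha' ha (fun _ => hb') (fun hh => absurd hh hc)).elim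
            · exact (no_lone_A hAne (fun s => (E s).symm) ha' ha (fun _ => hb') (fun hh => absurd hh hc)).elim
        · by_cases hc : c
          · by_cases hc' : c'
            · exact (no_swap_AB hAB (fun s => (E s).symm) ha' ha hb' hb (iff_of_true hc' hc)).elim
            · exact Or.inr (Or.inr (Or.inr (Or.inl ⟨ha, ha', hb, hb', hc, hc'⟩)))
          · by_cases hc' : c'
            · exact Or.inr (Or.inl ⟨hb, hb', ha, ha', hc, hc'⟩)
            · exact (no_swap_AB hAB (fun s => (E s).symm) ha' ha hb' hb (iff_of_false hc' hc)).elim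
      · by_cases hb' : b'
        · by_cases hc : c
          · by_cases hc' : c'
            · exact (no_lone_A hAne (fun s => (E s).symm) ha' ha (fun hh => absurd hh hb) (fun _ => hc')).elim
            · exact Or.inr (Or.inr (Or.inl ⟨hc, hc', ha, ha', hb, hb'⟩))
          · by_cases hc' : c'
            · exact (no_lone_A hAne (fun s => (E s).symm) ha' ha (fun hh => absurd hh hb) (fun hh => absurd hh hc)).elim
            · exact (no_lone_A hAne (fun s => (E s).symm) ha' ha (fun hh => absurd hh hb) (fun hh => absurd hh hc)).elim
        · by_cases hc : c
          · by_cases hc' : c'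
            · exact (no_lone_A hAne (fun s => (E s).symm) ha' ha (fun hh => absurd hh hb) (fun _ => hc')).elim
            · exact (no_swap_AC hAC (fun s => (E s).symm) ha' ha hc' hc (iff_of_false hb' hb)).elim
          · by_cases hc' : c'
            · exact (no_lone_A hAne (fun s => (E s).symm) ha' ha (fun hh => absurd hh hb) (fun hh => absurd hh hc)).elim
            · exact (no_lone_A hAne (fun s => (E s).symm) ha' ha (fun hh => absurd hh hb) (fun hh => absurd hh hc)).elim
    · by_cases hb : b
      · by_cases hb' : b'
        · by_cases hc : c
          · by_cases hc' : c'
            · exact absurd ⟨(iff_of_false ha ha'), (iff_of_true hb hb'), (iff_of_true hc hc')⟩ hne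
            · exact (no_lone_C hCne E hc hc' (fun hh => absurd hh ha') (fun _ => hb)).elim
          · by_cases hc' : c'
            · exact (no_lone_C hCne (fun s => (E s).symm) hc' hc (fun hh => absurd hh ha) (fun _ => hb')).elim
            · exact absurd ⟨(iff_of_false ha ha'), (iff_of_true hb hb'), (iff_of_false hc hc')⟩ hne
        · by_cases hc : c
          · by_cases hc' : c'
            · exact (no_lone_B hBne E hb hb' (fun hh => absurd hh ha') (fun _ => hc)).elim
            · exact (no_lone_B hBne E hb hb' (fun hh => absurd hh ha') (fun hh => absurd hh hc')).elim
          · by_cases hc' : c'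
            · exact (no_swap_BC hBC E hb hb' hc hc' (iff_of_false ha ha')).elim
            · exact (no_lone_B hBne E hb hb' (fun hh => absurd hh ha') (fun hh => absurd hh hc')).elim
      · by_cases hb' : b'
        · by_cases hc : c
          · by_cases hc' : c'
            · exact (no_lone_B hBne (fun s => (E s).symm) hb' hb (fun hh => absurd hh ha) (fun _ => hc')).elim
            · exact (no_swap_BC hBC (fun s => (E s).symm) hb' hb hc' hc (iff_of_false ha' ha)).elim
          · by_cases hc' : c'
            · exact (no_lone_B hBne (fun s => (E s).symm) hb' hb (fun hh => absurd hh ha) (fun hh => absurd hh hc)).elim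
            · exact (no_lone_B hBne (fun s => (E s).symm) hb' hb (fun hh => absurd hh ha) (fun hh => absurd hh hc)).elim
        · by_cases hc : c
          · by_cases hc' : c'
            · exact absurd ⟨(iff_of_false ha ha'), (iff_of_false hb hb'), (iff_of_true hc hc')⟩ hne
            · exact (no_lone_C hCne E hc hc' (fun hh => absurd hh ha') (fun hh => absurd hh hb')).elim
          · by_cases hc' : c'
            · exact (no_lone_C hCne (fun s => (E s).symm) hc' hc (fun hh => absurd hh ha) (fun hh => absurd hh hb)).elim
            · exact absurd ⟨(iff_of_false ha ha'), (iff_of_false hb hb'), (iff_of_false hc hc')⟩ hne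

lemma buildSplit {𝒟 : Finset (Finset ℕ)} (f g : Finset ℕ → Prop)
    [DecidablePred f] [DecidablePred g] {X Y Z : Finset ℕ}
    (hX : X ∈ 𝒟) (hY : Y ∈ 𝒟) (hZ : Z ∈ 𝒟)
    (hXY : X ≠ Y) (hXZ : X ≠ Z) (hYZ : Y ≠ Z)
    (hout : ∀ u ∈ 𝒟, u ≠ X → u ≠ Y → u ≠ Z → (f u ↔ g u))
    (h1 : f X) (h2 : ¬ g X) (h3 : ¬ f Y) (h4 : g Y) (h5 : ¬ f Z) (h6 : g Z) :
    SplitOf (𝒟.filter f) (𝒟.filter g) := by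
  refine ⟨X, Y, Z, hYZ, ?_, ?_⟩
  · ext u
    simp only [Finset.mem_sdiff, Finset.mem_filter, Finset.mem_singleton]
    constructor
    · rintro ⟨⟨hu𝒟, hfu⟩, hng⟩
      by_contra huX
      have hgu : ¬ g u := fun hgu => hng ⟨hu𝒟, hgu⟩
      by_cases huY : u = Y
      · rw [huY] at hfu; exact h3 hfu
      by_cases huZ : u = Z
      · rw [huZ] at hfu; exact h5 hfu
      exact hgu ((hout u hu𝒟 huX huY huZ).1 hfu)
    · rintro rfl
      exact ⟨⟨hX, h1⟩, fun hcon => h2 hcon.2⟩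
  · ext u
    simp only [Finset.mem_sdiff, Finset.mem_filter, Finset.mem_insert, Finset.mem_singleton]
    constructor
    · rintro ⟨⟨hu𝒟, hgu⟩, hnf⟩
      have hfu : ¬ f u := fun hfu => hnf ⟨hu𝒟, hfu⟩
      by_contra hcon
      push_neg at hcon
      by_cases huX : u = X
      · rw [huX] at hgu; exact h2 hgu
      exact hfu ((hout u hu𝒟 huX hcon.1 hcon.2).2 hgu)
    · rintro (rfl | rfl)
      · exact ⟨⟨hY, h4⟩, fun hcon => h3 hcon.2⟩
      · exact ⟨⟨hZ, h6⟩, fun hcon => h5 hcon.2⟩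

/-! ### Splicing a shortcut into a TJ-sequence -/

lemma splice_aux {𝒟 : Finset (Finset ℕ)} {S S' : Finset FV} (seq : ℕ → Finset FV)
    (ℓ i i' t : ℕ) (hseq : TJFeasSeq 𝒟 seq ℓ S S') (hii' : i ≤ i') (hi'ℓ : i' ≤ ℓ)
    (ht : t ≤ i' - i) (mid : ℕ → Finset FV) (hms : mid 0 = seq i) (hme : mid t = seq i')
    (hmf : ∀ k, k ≤ t → (∀ v ∈ mid k, v.valid 𝒟) ∧ FeasibleSet 𝒟 (mid k))
    (hmstep : ∀ k, k < t → (mid k \ mid (k+1)).card = 1 ∧ (mid (k+1) \ mid k).card = 1) :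
    TJFeasSeq 𝒟 (fun k => if k ≤ i then seq k else if k ≤ i + t then mid (k - i)
      else seq (k + (i' - i - t))) (ℓ - (i' - i - t)) S S' := by
  obtain ⟨hs0, hsl, hsf, hss⟩ := hseq
  refine ⟨?_, ?_, ?_, ?_⟩
  · simp only [if_pos (Nat.zero_le i)]
    exact hs0
  · simp only
    by_cases h1 : ℓ - (i' - i - t) ≤ i
    · rw [if_pos h1]
      have ht0 : t = 0 := by omega
      have hh : ℓ - (i' - i - t) = i := by omega
      have hℓ : ℓ = i' := by omega
      rw [hh, ← hms, ← ht0, hme, ← hℓ]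
      exact hsl
    · rw [if_neg h1]
      by_cases h2 : ℓ - (i' - i - t) ≤ i + t
      · rw [if_pos h2]
        have hh : ℓ - (i' - i - t) - i = t := by omega
        have hℓ : ℓ = i' := by omega
        rw [hh, hme, ← hℓ]
        exact hsl
      · rw [if_neg h2]
        have hh : ℓ - (i' - i - t) + (i' - i - t) = ℓ := by omega
        rw [hh]
        exact hsl
  · intro k hk
    simp only
    by_cases h1 : k ≤ i
    · rw [if_pos h1]
      exact hsf k (by omega)
    · rw [if_neg h1]
      by_cases h2 : k ≤ i + t
      · rw [if_pos h2]
        exact hmf (k - i) (by omega)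
      · rw [if_neg h2]
        exact hsf (k + (i' - i - t)) (by omega)
  · intro k hk
    simp only
    by_cases hk1 : k + 1 ≤ i
    · rw [if_pos (by omega : k ≤ i), if_pos hk1]
      exact hss k (by omega)
    · by_cases hk0 : k ≤ i
      · -- k = i
        have hkeq : k = i := by omega
        rw [if_pos hk0, if_neg hk1, hkeq]
        by_cases ht0 : t = 0
        · rw [if_neg (by omega : ¬ i + 1 ≤ i + t)]
          have hidx : i + 1 + (i' - i - t) = i' + 1 := by omega
          have hmid : seq i = seq i' := by
            rw [← hms, ← ht0]
            exact hme
          rw [hidx, hmid]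
          exact hss i' (by omega)
        · rw [if_pos (by omega : i + 1 ≤ i + t)]
          have hidx : i + 1 - i = 1 := by omega
          rw [hidx, ← hms]
          exact hmstep 0 (by omega)
      · rw [if_neg hk0, if_neg (by omega : ¬ k + 1 ≤ i)]
        by_cases hk2 : k + 1 ≤ i + t
        · rw [if_pos (by omega : k ≤ i + t), if_pos hk2]
          have hidx : k + 1 - i = (k - i) + 1 := by omega
          rw [hidx]
          exact hmstep (k - i) (by omega)
        · by_cases hk3 : k ≤ i + t
          · rw [if_pos hk3, if_neg hk2]
            have hkt : k - i = t := by omega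
            have hidx : k + 1 + (i' - i - t) = i' + 1 := by omega
            rw [hkt, hme, hidx]
            exact hss i' (by omega)
          · rw [if_neg hk3, if_neg hk2]
            have hidx : k + 1 + (i' - i - t) = (k + (i' - i - t)) + 1 := by omega
            rw [hidx]
            exact hss (k + (i' - i - t)) (by omega)

/-- a three-step interpolation -/
def mid3 (R0 R1 R2 : Finset FV) : ℕ → Finset FV
  | 0 => R0
  | 1 => R1
  | _ => R2

/-- Let `seq 0, …, seq ℓ` be a minimum-length TJ-sequence of
feasible sets from `tokenSet 𝒞` to `tokenSet 𝒞'` in `F(U, 𝒟)`, and for each index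
`n` let `𝒮 n = {D ∈ 𝒟 : T_D is full under seq n}`.  If `seq i` and `seq i'` are
clean, `i + 1 < i'`, and `seq j` is not clean for every `i < j < i'`, then
`𝒮 i'` is obtained from `𝒮 i` by a split or by a merge. -/
theorem stmt13 (U : Finset ℕ) (hU : ∀ u ∈ U, 3 ≤ u)
    (𝒟 : Finset (Finset ℕ)) (h𝒟 : ∀ D ∈ 𝒟, D ⊆ U ∧ D.Nonempty)
    (𝒞 𝒞' : Finset (Finset ℕ)) (h𝒞 : 𝒞 ⊆ 𝒟) (h𝒞' : 𝒞' ⊆ 𝒟)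
    (hec : ExactCover U 𝒞) (hec' : ExactCover U 𝒞')
    (seq : ℕ → Finset FV) (ℓ : ℕ)
    (hseq : TJFeasSeq 𝒟 seq ℓ (tokenSet 𝒞) (tokenSet 𝒞'))
    (hmin : ∀ (seq' : ℕ → Finset FV) (ℓ' : ℕ),
      TJFeasSeq 𝒟 seq' ℓ' (tokenSet 𝒞) (tokenSet 𝒞') → ℓ ≤ ℓ')
    (i i' : ℕ) (hi' : i' ≤ ℓ) (hlt : i + 1 < i')
    (hci : CleanSet 𝒟 (seq i)) (hci' : CleanSet 𝒟 (seq i'))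
    (hnc : ∀ j, i < j → j < i' → ¬ CleanSet 𝒟 (seq j)) :
    SplitOrMerge (𝒟.filter fun D => treeFull D (seq i))
      (𝒟.filter fun D => treeFull D (seq i')) := by
  have h3 : ∀ D ∈ 𝒟, ∀ e ∈ D, 3 ≤ e := fun D hD e he => hU e ((h𝒟 D hD).1 he)
  have hfe : ∀ j, j ≤ ℓ → FeasibleSet 𝒟 (seq j) := fun j hj => (hseq.2.2.1 j hj).2
  have hva : ∀ j, j ≤ ℓ → ∀ x ∈ seq j, x.valid 𝒟 := fun j hj => (hseq.2.2.1 j hj).1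
  have hst : ∀ j, j < ℓ → ∃ v w, stepRel (seq j) (seq (j+1)) v w :=
    fun j hj => step_exists (hseq.2.2.2 j hj).1 (hseq.2.2.2 j hj).2
  -- Phi is conserved along the sequence
  have hphi : ∀ j, i ≤ j → j ≤ i' → ∀ s, Phi 𝒟 s (seq j) = Phi 𝒟 s (seq i) := by
    intro j hij
    induction j, hij using Nat.le_induction with
    | base => intro _ s; rfl
    | succ n hn ih =>
      intro hle s
      have hnl : n < ℓ := by omega
      obtain ⟨v, w, hs⟩ := hst n hnl
      rw [phi_step h3 (hva n (by omega)) (hva (n+1) (by omega)) (hfe n (by omega))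
        (hfe (n+1) (by omega)) hs s]
      exact ih (by omega) s
  have hFS : ∀ s, fullStars 𝒟 s (seq i') = fullStars 𝒟 s (seq i) := by
    intro s
    have := hphi i' (by omega) le_rfl s
    unfold Phi at this
    rw [clean_inF hci' s, clean_inF hci s] at this
    omega
  -- the three marked trees of the phase
  have hnc1 : ¬ CleanSet 𝒟 (seq (i+1)) := hnc (i+1) (by omega) (by omega)
  obtain ⟨A, B, C, a1, a2, hN⟩ := feas_struct (hfe (i+1) (by omega)) hnc1
  have hA𝒟 : A ∈ 𝒟 := hN.1
  have hB𝒟 : B ∈ 𝒟 := hN.2.1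
  have hC𝒟 : C ∈ 𝒟 := hN.2.2.1
  have hAB : A ≠ B := hN.2.2.2.1
  have hAC : A ≠ C := hN.2.2.2.2.1
  have hBC : B ≠ C := hN.2.2.2.2.2.1
  -- antennae do not move during the phase
  have hant : ∀ j, i + 1 ≤ j → j < i' → ∀ X a,
      (FV.antenna X a ∈ seq j ↔ FV.antenna X a ∈ seq (i+1)) := by
    intro j hij
    induction j, hij using Nat.le_induction with
    | base => intro _ X a; rfl
    | succ n hn ih =>
      intro hle X a
      have hnl : n < ℓ := by omega
      obtain ⟨v, w, hs⟩ := hst n hnl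
      rw [step_antenna_eq hs (hfe n (by omega)) (hfe (n+1) (by omega))
        (Or.inl (hnc n (by omega) (by omega))) X a]
      exact ih (by omega) X a
  -- trees marked during the phase are exactly A, B, C
  have hMk : ∀ j, i < j → j < i' → ∀ X, X ∈ 𝒟 →
      (treeMarked X (seq j) ↔ (X = A ∨ X = B ∨ X = C)) := by
    intro j hij hji' X hX
    have hcongr : treeMarked X (seq j) ↔ treeMarked X (seq (i+1)) :=
      treeMarked_congr (fun a => hant j (by omega) hji' X a)
    rw [hcongr]
    constructor
    · exact fun hm => hN.2.2.2.2.2.2.2.2.2.1 X hX hm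
    · rintro (rfl | rfl | rfl)
      · exact hN.2.2.2.2.2.2.1
      · exact hN.2.2.2.2.2.2.2.1
      · exact hN.2.2.2.2.2.2.2.2.1
  -- leaves of trees other than A, B, C do not move during the phase
  have hloc : ∀ X, X ∈ 𝒟 → ¬ (X = A ∨ X = B ∨ X = C) → ∀ e jj,
      ∀ j, i ≤ j → j ≤ i' → (FV.leaf X e jj ∈ seq j ↔ FV.leaf X e jj ∈ seq i) := by
    intro X hX hXM e jj j hij
    induction j, hij using Nat.le_induction with
    | base => intro _; rfl
    | succ n hn ih =>
      intro hle
      have hnl : n < ℓ := by omega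
      obtain ⟨v, w, hs⟩ := hst n hnl
      have hstep : FV.leaf X e jj ∈ seq (n+1) ↔ FV.leaf X e jj ∈ seq n := by
        by_contra hch
        obtain ⟨hX', hcase⟩ := moved_leaf_marked h3 (hva n (by omega)) (hva (n+1) (by omega))
          (hfe n (by omega)) (hfe (n+1) (by omega)) hs hch
        rcases hcase with ⟨hncn, hm⟩ | ⟨hncn1, hm⟩
        · have hni : i < n := by
            rcases Nat.lt_or_ge i n with h | h
            · exact h
            · exfalso; have : n = i := by omega
              rw [this] at hncn; exact hncn hci
          exact hXM ((hMk n hni (by omega) X hX).1 hm)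
        · have hn1 : n + 1 < i' := by
            rcases Nat.lt_or_ge (n+1) i' with h | h
            · exact h
            · exfalso; have : n + 1 = i' := by omega
              rw [this] at hncn1; exact hncn1 hci'
          exact hXM ((hMk (n+1) (by omega) hn1 X hX).1 hm)
      rw [hstep]
      exact ih (by omega)
  have houtM : ∀ X, X ∈ 𝒟 → ¬ (X = A ∨ X = B ∨ X = C) →
      (treeFull X (seq i) ↔ treeFull X (seq i')) := by
    intro X hX hXM
    exact (treeFull_congr (fun e jj => hloc X hX hXM e jj i' (by omega) le_rfl)).symm
  -- the per-size counting identity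
  have hMsub : ({A, B, C} : Finset (Finset ℕ)) ⊆ 𝒟 := by
    intro x hx
    simp only [Finset.mem_insert, Finset.mem_singleton] at hx
    rcases hx with rfl | rfl | rfl <;> assumption
  have hE : ∀ s : ℕ, ((if s ∈ A ∧ treeFull A (seq i') then 1 else 0)
      + (if s ∈ B ∧ treeFull B (seq i') then 1 else 0)
      + (if s ∈ C ∧ treeFull C (seq i') then 1 else 0) : ℕ)
      = (if s ∈ A ∧ treeFull A (seq i) then 1 else 0)
      + (if s ∈ B ∧ treeFull B (seq i) then 1 else 0)
      + (if s ∈ C ∧ treeFull C (seq i) then 1 else 0) := by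
    intro s
    have hcount := hFS s
    rw [fullStars_clean_count h3 hci' s, fullStars_clean_count h3 hci s] at hcount
    rw [← Finset.sum_sdiff hMsub, ← Finset.sum_sdiff hMsub] at hcount
    have htail : ∑ X ∈ 𝒟 \ {A, B, C}, (if s ∈ X ∧ treeFull X (seq i') then (1:ℕ) else 0)
        = ∑ X ∈ 𝒟 \ {A, B, C}, (if s ∈ X ∧ treeFull X (seq i) then 1 else 0) := by
      apply Finset.sum_congr rfl
      intro X hXm
      rw [Finset.mem_sdiff] at hXm
      have hXM : ¬ (X = A ∨ X = B ∨ X = C) := by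
        intro hcon
        apply hXm.2
        simp only [Finset.mem_insert, Finset.mem_singleton]
        exact hcon
      exact if_congr (and_congr_right fun _ => (houtM X hXm.1 hXM).symm) rfl rfl
    rw [htail] at hcount
    have hexp : ∀ (R : Finset FV), ∑ X ∈ ({A, B, C} : Finset (Finset ℕ)),
        (if s ∈ X ∧ treeFull X R then (1:ℕ) else 0)
        = (if s ∈ A ∧ treeFull A R then 1 else 0) + (if s ∈ B ∧ treeFull B R then 1 else 0)
          + (if s ∈ C ∧ treeFull C R then 1 else 0) := by
      intro R
      rw [Finset.sum_insert (by simp [hAB, hAC]), Finset.sum_insert (by simp [hBC]),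
        Finset.sum_singleton]
      ring
    rw [hexp, hexp] at hcount
    omega
  -- the phase is not trivial (else the sequence would not be minimal)
  have hne : ¬ ((treeFull A (seq i) ↔ treeFull A (seq i'))
      ∧ (treeFull B (seq i) ↔ treeFull B (seq i'))
      ∧ (treeFull C (seq i) ↔ treeFull C (seq i'))) := by
    rintro ⟨hiffA, hiffB, hiffC⟩
    have hsame : ∀ X, X ∈ 𝒟 → (treeFull X (seq i) ↔ treeFull X (seq i')) := by
      intro X hX
      by_cases hXM : X = A ∨ X = B ∨ X = C
      · rcases hXM with rfl | rfl | rfl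
        · exact hiffA
        · exact hiffB
        · exact hiffC
      · exact houtM X hX hXM
    have hlp : ∀ (X : Finset ℕ) (e jj : ℕ),
        (FV.leaf X e jj ∈ seq i' ↔ FV.leaf X e jj ∈ seq i) := by
      intro X e jj
      constructor
      · intro hmem
        obtain ⟨hX, he, hj⟩ := hva i' hi' _ hmem
        rcases hci'.2 X hX with hf | hemp
        · exact (hsame X hX).2 hf e he jj hj
        · exact absurd hmem (hemp e he jj hj)
      · intro hmem
        obtain ⟨hX, he, hj⟩ := hva i (by omega) _ hmem
        rcases hci.2 X hX with hf | hemp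
        · exact (hsame X hX).1 hf e he jj hj
        · exact absurd hmem (hemp e he jj hj)
    obtain ⟨vb, wb, hsi⟩ := hst i (by omega)
    have hbl1 : ∀ x : FV, x.isStarLeaf = false → (x ∈ seq (i+1) ↔ x ∈ seq i) := by
      rcases step_parity hsi (hfe i (by omega)) (hfe (i+1) (by omega)) with
        ⟨hvl, hwl⟩ | ⟨hvl, hwl⟩
      · exact fun x hx => nonleaf_mem_eq hsi hvl hwl hx
      · exact absurd ((nonleaf_move_clean_iff hsi (hfe i (by omega)) (hfe (i+1) (by omega))
          hvl hwl).1 hci) hnc1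
    obtain ⟨vb', wb', hsi'0⟩ := hst (i' - 1) (by omega)
    have hieq : i' - 1 + 1 = i' := by omega
    rw [hieq] at hsi'0
    have hncl : ¬ CleanSet 𝒟 (seq (i' - 1)) := hnc (i' - 1) (by omega) (by omega)
    have hbl2 : ∀ x : FV, x.isStarLeaf = false → (x ∈ seq i' ↔ x ∈ seq (i' - 1)) := by
      rcases step_parity hsi'0 (hfe (i'-1) (by omega)) (hfe i' hi') with
        ⟨hvl, hwl⟩ | ⟨hvl, hwl⟩
      · exact fun x hx => nonleaf_mem_eq hsi'0 hvl hwl hx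
      · exact absurd ((nonleaf_move_clean_iff hsi'0 (hfe (i'-1) (by omega)) (hfe i' hi')
          hvl hwl).2 hci') hncl
    have hlit1 : (seq (i+1)).filter (fun x => x.isStarLeaf = false) = litSet A B C a1 a2 :=
      nonleaf_eq_lit (feas_card8 (hfe (i+1) (by omega))) hN
    obtain ⟨A', B', C', a1', a2', hN'⟩ := feas_struct (hfe (i'-1) (by omega)) hncl
    have hlit2 : (seq (i'-1)).filter (fun x => x.isStarLeaf = false)
        = litSet A' B' C' a1' a2' :=
      nonleaf_eq_lit (feas_card8 (hfe (i'-1) (by omega))) hN'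
    have hsub : ∀ x ∈ seq i, x ∉ seq i' → x = FV.center A a1 ∨ x = FV.center B a2 := by
      intro x hx hx'
      cases hxl : x.isStarLeaf
      · have hx1 : x ∈ seq (i + 1) := (hbl1 x hxl).2 hx
        have hxlit : x ∈ litSet A B C a1 a2 := by
          rw [← hlit1]
          exact Finset.mem_filter.2 ⟨hx1, hxl⟩
        have hanti : ∀ (X : Finset ℕ) (k : ℕ), x = FV.antenna X k → False := by
          intro X k hxa
          apply hx'
          rw [hxa]
          apply (hbl2 (FV.antenna X k) rfl).2
          apply (hant (i'-1) (by omega) (by omega) X k).2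
          rw [← hxa]
          exact hx1
        unfold litSet at hxlit
        simp only [Finset.mem_insert, Finset.mem_singleton] at hxlit
        rcases hxlit with h|h|h|h|h|h|h|h
        · exact (hanti _ _ h).elim
        · exact (hanti _ _ h).elim
        · exact (hanti _ _ h).elim
        · exact (hanti _ _ h).elim
        · exact (hanti _ _ h).elim
        · exact (hanti _ _ h).elim
        · exact Or.inl h
        · exact Or.inr h
      · exfalso
        obtain ⟨X, e, jj, rfl⟩ := isLeaf_cases x hxl
        exact hx' ((hlp X e jj).2 hx)
    have hsub' : ∀ x ∈ seq i', x ∉ seq i → x = FV.center A' a1' ∨ x = FV.center B' a2' := by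
      intro x hx hx'
      cases hxl : x.isStarLeaf
      · have hx1 : x ∈ seq (i' - 1) := (hbl2 x hxl).1 hx
        have hxlit : x ∈ litSet A' B' C' a1' a2' := by
          rw [← hlit2]
          exact Finset.mem_filter.2 ⟨hx1, hxl⟩
        have hanti : ∀ (X : Finset ℕ) (k : ℕ), x = FV.antenna X k → False := by
          intro X k hxa
          apply hx'
          rw [hxa]
          apply (hbl1 (FV.antenna X k) rfl).1
          apply (hant (i'-1) (by omega) (by omega) X k).1
          rw [← hxa]
          exact hx1
        unfold litSet at hxlit
        simp only [Finset.mem_insert, Finset.mem_singleton] at hxlit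
        rcases hxlit with h|h|h|h|h|h|h|h
        · exact (hanti _ _ h).elim
        · exact (hanti _ _ h).elim
        · exact (hanti _ _ h).elim
        · exact (hanti _ _ h).elim
        · exact (hanti _ _ h).elim
        · exact (hanti _ _ h).elim
        · exact Or.inl h
        · exact Or.inr h
      · exfalso
        obtain ⟨X, e, jj, rfl⟩ := isLeaf_cases x hxl
        exact hx' ((hlp X e jj).1 hx)
    have hcc : ∀ j, j ≤ ℓ → (seq j).card = (seq 0).card := by
      intro j hj
      induction j with
      | zero => rfl
      | succ n ih =>
        obtain ⟨v0, w0, hs0⟩ := hst n (by omega)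
        rw [hs0.card_eq]
        exact ih (by omega)
    have hceq : (seq i).card = (seq i').card := by
      rw [hcc i (by omega), hcc i' hi']
    have hsdc : (seq i' \ seq i).card = (seq i \ seq i').card := by
      have h1 := Finset.card_sdiff_add_card_inter (seq i) (seq i')
      have h2 := Finset.card_sdiff_add_card_inter (seq i') (seq i)
      rw [Finset.inter_comm] at h2
      omega
    have hsubs : seq i \ seq i' ⊆ {FV.center A a1, FV.center B a2} := by
      intro x hx
      rw [Finset.mem_sdiff] at hx
      rcases hsub x hx.1 hx.2 with h | h <;> simp [h]
    have htle : (seq i \ seq i').card ≤ 2 :=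
      le_trans (Finset.card_le_card hsubs)
        (le_trans (Finset.card_insert_le _ _) (by simp))
    have habs : ∀ (mid : ℕ → Finset FV) (t : ℕ), t ≤ i' - i → mid 0 = seq i →
        mid t = seq i' →
        (∀ k, k ≤ t → (∀ v0 ∈ mid k, v0.valid 𝒟) ∧ FeasibleSet 𝒟 (mid k)) →
        (∀ k, k < t → (mid k \ mid (k+1)).card = 1 ∧ (mid (k+1) \ mid k).card = 1) →
        t < i' - i → False := by
      intro mid t h1 h2 h3' h4 h5 h6
      have := hmin _ _ (splice_aux seq ℓ i i' t hseq (by omega) hi' h1 mid h2 h3' h4 h5)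
      omega
    rcases (by omega : (seq i \ seq i').card = 0 ∨ (seq i \ seq i').card = 1
        ∨ (seq i \ seq i').card = 2) with ht0 | ht1 | ht2'
    · -- empty difference : seq i = seq i'
      have e1 : seq i \ seq i' = ∅ := Finset.card_eq_zero.1 ht0
      have e2 : seq i' \ seq i = ∅ := Finset.card_eq_zero.1 (by omega)
      have heq : seq i = seq i' :=
        Finset.Subset.antisymm (Finset.sdiff_eq_empty_iff_subset.1 e1)
          (Finset.sdiff_eq_empty_iff_subset.1 e2)
      exact habs (fun _ => seq i) 0 (by omega) rfl heq
        (fun k _ => ⟨hva i (by omega), hfe i (by omega)⟩)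
        (fun k hk => absurd hk (by omega)) (by omega)
    · -- difference of one token
      exact habs (mid3 (seq i) (seq i') (seq i')) 1 (by omega) rfl rfl
        (by
          intro k hk
          match k with
          | 0 => exact ⟨hva i (by omega), hfe i (by omega)⟩
          | 1 => exact ⟨hva i' hi', hfe i' hi'⟩
          | (n+2) => exact ⟨hva i' hi', hfe i' hi'⟩)
        (by
          intro k hk
          match k with
          | 0 =>
            refine ⟨ht1, ?_⟩
            show (seq i' \ seq i).card = 1
            omega
          | (n+1) => exact absurd hk (by omega))
        (by omega)
    · -- difference of two tokens
      have hd3 : i + 3 ≤ i' := by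
        by_contra hcon
        have h12 : i' - 1 = i + 1 := by omega
        have heq : seq i = seq i' := by
          apply Finset.ext
          intro x
          cases hxl : x.isStarLeaf
          · have hb := hbl2 x hxl
            rw [h12] at hb
            exact ((hb.trans (hbl1 x hxl)).symm)
          · obtain ⟨X, e, jj, rfl⟩ := isLeaf_cases x hxl
            exact (hlp X e jj).symm
        rw [heq, Finset.sdiff_self] at ht2'
        simp at ht2'
      obtain ⟨v1, v2, hv12, hveq⟩ := Finset.card_eq_two.1 ht2'
      obtain ⟨w1, w2, hw12, hweq⟩ :=
        Finset.card_eq_two.1 (show (seq i' \ seq i).card = 2 by omega)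
      have hv1 : v1 ∈ seq i ∧ v1 ∉ seq i' := by
        have : v1 ∈ seq i \ seq i' := by rw [hveq]; simp
        exact Finset.mem_sdiff.1 this
      have hv2 : v2 ∈ seq i ∧ v2 ∉ seq i' := by
        have : v2 ∈ seq i \ seq i' := by rw [hveq]; simp
        exact Finset.mem_sdiff.1 this
      have hw1m : w1 ∈ seq i' ∧ w1 ∉ seq i := by
        have : w1 ∈ seq i' \ seq i := by rw [hweq]; simp
        exact Finset.mem_sdiff.1 this
      have hw2m : w2 ∈ seq i' ∧ w2 ∉ seq i := by
        have : w2 ∈ seq i' \ seq i := by rw [hweq]; simp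
        exact Finset.mem_sdiff.1 this
      have hv1nl : v1.isStarLeaf = false := by
        rcases hsub v1 hv1.1 hv1.2 with h | h <;> (rw [h]; rfl)
      have hw1nl : w1.isStarLeaf = false := by
        rcases hsub' w1 hw1m.1 hw1m.2 with h | h <;> (rw [h]; rfl)
      have hvw1 : v1 ≠ w1 := fun h => hw1m.2 (h ▸ hv1.1)
      have hTmmem : ∀ x, x ∈ insert w1 ((seq i).erase v1) ↔
          (x = w1 ∨ (x ≠ v1 ∧ x ∈ seq i)) := by
        intro x
        simp [Finset.mem_insert, Finset.mem_erase]
      have hTmleaf : ∀ (X : Finset ℕ) (e jj : ℕ),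
          (FV.leaf X e jj ∈ insert w1 ((seq i).erase v1) ↔ FV.leaf X e jj ∈ seq i) := by
        intro X e jj
        rw [hTmmem]
        constructor
        · rintro (h | ⟨-, h⟩)
          · rw [← h] at hw1nl
            simp [FV.isStarLeaf] at hw1nl
          · exact h
        · intro h
          refine Or.inr ⟨fun hcon => ?_, h⟩
          rw [← hcon] at hv1nl
          simp [FV.isStarLeaf] at hv1nl
      have hTmclean : CleanSet 𝒟 (insert w1 ((seq i).erase v1)) := by
        constructor
        · rw [Finset.filter_insert, if_pos hw1nl, Finset.filter_erase]
          have hv1f : v1 ∈ (seq i).filter (fun v0 => v0.isStarLeaf = false) :=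
            Finset.mem_filter.2 ⟨hv1.1, hv1nl⟩
          rw [Finset.card_insert_of_notMem
            (fun hcon => hw1m.2 (Finset.mem_filter.1 (Finset.mem_of_mem_erase hcon)).1),
            Finset.card_erase_of_mem hv1f]
          have h8 := hci.1
          have : 0 < ((seq i).filter (fun v0 => v0.isStarLeaf = false)).card :=
            Finset.card_pos.2 ⟨v1, hv1f⟩
          omega
        · intro D hD
          exact (treeClean_congr (fun e jj => hTmleaf D e jj)).2 (hci.2 D hD)
      have hTmvalid : ∀ x ∈ insert w1 ((seq i).erase v1), x.valid 𝒟 := by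
        intro x hx
        rcases (hTmmem x).1 hx with rfl | ⟨-, hxm⟩
        · exact hva i' hi' _ hw1m.1
        · exact hva i (by omega) _ hxm
      have s1 : seq i \ insert w1 ((seq i).erase v1) = {v1} := by
        ext x
        rw [Finset.mem_sdiff, hTmmem, Finset.mem_singleton]
        constructor
        · rintro ⟨hxm, hxn⟩
          push_neg at hxn
          by_contra hne'
          exact hxn.2 hne' hxm
        · rintro rfl
          refine ⟨hv1.1, fun hcon => ?_⟩
          rcases hcon with h | ⟨h, -⟩
          · exact hvw1 h
          · exact h rfl
      have s2 : insert w1 ((seq i).erase v1) \ seq i = {w1} := by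
        ext x
        rw [Finset.mem_sdiff, hTmmem, Finset.mem_singleton]
        constructor
        · rintro ⟨(rfl | ⟨-, hxm⟩), hxn⟩
          · rfl
          · exact absurd hxm hxn
        · rintro rfl
          exact ⟨Or.inl rfl, hw1m.2⟩
      have s3 : insert w1 ((seq i).erase v1) \ seq i' = {v2} := by
        ext x
        rw [Finset.mem_sdiff, hTmmem, Finset.mem_singleton]
        constructor
        · rintro ⟨(rfl | ⟨hne', hxm⟩), hxn⟩
          · exact absurd hw1m.1 hxn
          · have : x ∈ seq i \ seq i' := Finset.mem_sdiff.2 ⟨hxm, hxn⟩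
            rw [hveq] at this
            simp only [Finset.mem_insert, Finset.mem_singleton] at this
            rcases this with rfl | rfl
            · exact absurd rfl hne'
            · rfl
        · rintro rfl
          refine ⟨Or.inr ⟨fun hcon => hv12 hcon.symm, hv2.1⟩, hv2.2⟩
      have s4 : seq i' \ insert w1 ((seq i).erase v1) = {w2} := by
        ext x
        rw [Finset.mem_sdiff, hTmmem, Finset.mem_singleton]
        constructor
        · rintro ⟨hxm, hxn⟩
          push_neg at hxn
          have hxw1 : x ≠ w1 := hxn.1
          have hxi : x ∉ seq i := by
            by_cases hxv1 : x = v1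
            · rw [hxv1] at hxm
              exact absurd hxm hv1.2
            · intro hcon
              exact (hxn.2 hxv1) hcon
          have : x ∈ seq i' \ seq i := Finset.mem_sdiff.2 ⟨hxm, hxi⟩
          rw [hweq] at this
          simp only [Finset.mem_insert, Finset.mem_singleton] at this
          rcases this with rfl | rfl
          · exact absurd rfl hxw1
          · rfl
        · rintro rfl
          refine ⟨hw2m.1, fun hcon => ?_⟩
          rcases hcon with h | ⟨-, h⟩
          · exact hw12 h.symm
          · exact hw2m.2 h
      exact habs (mid3 (seq i) (insert w1 ((seq i).erase v1)) (seq i')) 2 (by omega) rfl rfl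
        (by
          intro k hk
          match k with
          | 0 => exact ⟨hva i (by omega), hfe i (by omega)⟩
          | 1 => exact ⟨hTmvalid, Or.inl hTmclean⟩
          | (n+2) => exact ⟨hva i' hi', hfe i' hi'⟩)
        (by
          intro k hk
          match k with
          | 0 =>
            constructor
            · show (seq i \ insert w1 ((seq i).erase v1)).card = 1
              rw [s1]; rfl
            · show (insert w1 ((seq i).erase v1) \ seq i).card = 1
              rw [s2]; rfl
          | 1 =>
            constructor
            · show (insert w1 ((seq i).erase v1) \ seq i').card = 1
              rw [s3]; rfl
            · show (seq i' \ insert w1 ((seq i).erase v1)).card = 1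
              rw [s4]; rfl
          | (n+2) => exact absurd hk (by omega))
        (by omega)
  -- case analysis
  have hAne : A.Nonempty := (h𝒟 A hA𝒟).2
  have hBne : B.Nonempty := (h𝒟 B hB𝒟).2
  have hCne : C.Nonempty := (h𝒟 C hC𝒟).2
  have hout' : ∀ u ∈ 𝒟, u ≠ A → u ≠ B → u ≠ C →
      ((fun D => treeFull D (seq i)) u ↔ (fun D => treeFull D (seq i')) u) := by
    intro u hu h1 h2 h3'
    exact houtM u hu (by tauto)
  rcases endgame hAB hAC hBC hAne hBne hCne _ _ _ _ _ _ hE hne with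
    hP | hP | hP | hP | hP | hP
  · exact Or.inl (buildSplit _ _ hA𝒟 hB𝒟 hC𝒟 hAB hAC hBC hout'
      hP.1 hP.2.1 hP.2.2.1 hP.2.2.2.1 hP.2.2.2.2.1 hP.2.2.2.2.2)
  · exact Or.inl (buildSplit _ _ hB𝒟 hA𝒟 hC𝒟 (Ne.symm hAB) hBC hAC
      (fun u hu h1 h2 h3' => hout' u hu h2 h1 h3')
      hP.1 hP.2.1 hP.2.2.1 hP.2.2.2.1 hP.2.2.2.2.1 hP.2.2.2.2.2)
  · exact Or.inl (buildSplit _ _ hC𝒟 hA𝒟 hB𝒟 (Ne.symm hAC) (Ne.symm hBC) hAB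
      (fun u hu h1 h2 h3' => hout' u hu h2 h3' h1)
      hP.1 hP.2.1 hP.2.2.1 hP.2.2.2.1 hP.2.2.2.2.1 hP.2.2.2.2.2)
  · exact Or.inr (buildSplit _ _ hA𝒟 hB𝒟 hC𝒟 hAB hAC hBC
      (fun u hu h1 h2 h3' => (hout' u hu h1 h2 h3').symm)
      hP.2.1 (fun hcon => hP.1 hcon) hP.2.2.2.1 hP.2.2.1 hP.2.2.2.2.2 hP.2.2.2.2.1)
  · exact Or.inr (buildSplit _ _ hB𝒟 hA𝒟 hC𝒟 (Ne.symm hAB) hBC hAC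
      (fun u hu h1 h2 h3' => (hout' u hu h2 h1 h3').symm)
      hP.2.1 (fun hcon => hP.1 hcon) hP.2.2.2.1 hP.2.2.1 hP.2.2.2.2.2 hP.2.2.2.2.1)
  · exact Or.inr (buildSplit _ _ hC𝒟 hA𝒟 hB𝒟 (Ne.symm hAC) (Ne.symm hBC) hAB
      (fun u hu h1 h2 h3' => (hout' u hu h2 h3' h1).symm)
      hP.2.1 (fun hcon => hP.1 hcon) hP.2.2.2.1 hP.2.2.1 hP.2.2.2.2.2 hP.2.2.2.2.1)
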